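/- arXiv:2209.10203 — 4 statements merged into one kernel-verified Lean document; each statement's English description precedes it below -/
import Mathlib

section
/- Let {a_j} be a solution of the inviscid dyadic model on [0,∞) whose initial data satisfies ‖a(0)‖_{H^1} < ∞ and a(0) ≠ 0 (i.e. a_j(0) ≠ 0 for some j ≥ 0). Then the solution blows up in finite time in H^1: there exists a finite time T > 0 such that sup_{0 ≤ t < T} ‖a(t)‖_{H^1} = ∞. -/
open MeasureTheory Filter
open scoped ENNReal

/-- The (possibly infinite) squared `H^s` norm of a sequence, with `λ_j = lam ^ j`:
`‖a‖_{H^s}² = Σ_j λ_j^{2s} a_j²`. -/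
noncomputable def Hsq (lam s : ℝ) (a : ℕ → ℝ) : ℝ≥0∞ :=
  ∑' j : ℕ, ENNReal.ofReal ((lam ^ j) ^ (2 * s) * (a j) ^ 2)

/-- A solution of the inviscid dyadic model on `[0,∞)`:
`a_j' = λ_j a_{j-1}² − λ_{j+1} a_j a_{j+1}`, with the convention `a_{-1} ≡ 0`. -/
def IsInviscidSol (lam : ℝ) (a : ℕ → ℝ → ℝ) : Prop :=
  ∀ j : ℕ, ∀ t ∈ Set.Ici (0 : ℝ),
    HasDerivWithinAt (a j)
      (lam ^ j * (if j = 0 then (0 : ℝ) else a (j - 1) t) ^ 2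
        - lam ^ (j + 1) * a j t * a (j + 1) t) (Set.Ici 0) t

/-- RHS of the dyadic model ODE. -/
noncomputable def dyadRHS (lam : ℝ) (a : ℕ → ℝ → ℝ) (j : ℕ) (t : ℝ) : ℝ :=
  lam ^ j * (if j = 0 then (0 : ℝ) else a (j - 1) t) ^ 2
    - lam ^ (j + 1) * a j t * a (j + 1) t

/-- Mean value: derivative bounded below gives linear growth lower bound. -/
lemma mvd_ge {f f' : ℝ → ℝ} {b C : ℝ} (hb : 0 ≤ b)
    (hd : ∀ t ∈ Set.Icc (0:ℝ) b, HasDerivWithinAt f (f' t) (Set.Ici 0) t)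
    (hC : ∀ t ∈ Set.Icc (0:ℝ) b, C ≤ f' t) : C * b ≤ f b - f 0 := by
  rcases eq_or_lt_of_le hb with h0 | h0
  · simp [← h0]
  have hconv : Convex ℝ (Set.Icc (0:ℝ) b) := convex_Icc _ _
  have hcont : ContinuousOn f (Set.Icc (0:ℝ) b) := by
    intro t ht
    exact ((hd t ht).continuousWithinAt).mono (fun x hx => hx.1)
  have hint : interior (Set.Icc (0:ℝ) b) = Set.Ioo 0 b := interior_Icc
  have hderiv : ∀ x ∈ interior (Set.Icc (0:ℝ) b), HasDerivAt f (f' x) x := by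
    intro x hx
    rw [hint] at hx
    exact (hd x ⟨hx.1.le, hx.2.le⟩).hasDerivAt (Ici_mem_nhds hx.1)
  have hdiff : DifferentiableOn ℝ f (interior (Set.Icc (0:ℝ) b)) :=
    fun x hx => ((hderiv x hx).differentiableAt).differentiableWithinAt
  have hge : ∀ x ∈ interior (Set.Icc (0:ℝ) b), C ≤ deriv f x := by
    intro x hx
    rw [(hderiv x hx).deriv]
    rw [hint] at hx
    exact hC x ⟨hx.1.le, hx.2.le⟩
  have := hconv.mul_sub_le_image_sub_of_le_deriv hcont hdiff hge 0
    ⟨le_refl _, hb⟩ b ⟨hb, le_refl _⟩ hb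
  simpa using this

lemma geom_sum_le_inv {r : ℝ} (h0 : 0 ≤ r) (h1 : r < 1) (n : ℕ) :
    ∑ k ∈ Finset.range n, r ^ k ≤ (1 - r)⁻¹ := by
  have h1r : 0 < 1 - r := by linarith
  rw [geom_sum_eq (ne_of_lt h1) n]
  rw [div_le_iff_of_neg (by linarith : r - 1 < 0)]
  have he : (1 - r)⁻¹ * (r - 1) = -1 := by field_simp; ring
  rw [he]
  have : 0 ≤ r ^ n := pow_nonneg h0 n
  linarith

lemma sumE_eq (lam : ℝ) (a : ℕ → ℝ → ℝ) (m : ℕ) (t : ℝ) :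
    ∑ j ∈ Finset.range (m+1), 2 * a j t * dyadRHS lam a j t
      = -(2 * lam ^ (m+1) * (a m t)^2 * a (m+1) t) := by
  induction m with
  | zero => simp [dyadRHS]; ring
  | succ n ih =>
      rw [Finset.sum_range_succ, ih]
      simp only [dyadRHS, Nat.succ_ne_zero, if_false, Nat.add_sub_cancel]
      ring

lemma sumP_eq (μ lam : ℝ) (hμ : 0 < μ) (hl : lam = μ ^ 8) (a : ℕ → ℝ → ℝ) (m : ℕ) (t : ℝ) :
    ∑ k ∈ Finset.range (m+1), (μ ^ (2*k))⁻¹ * dyadRHS lam a k t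
      = ∑ j ∈ Finset.range m, μ ^ (6*j+6) * (a j t)^2
        - ∑ j ∈ Finset.range (m+1), μ ^ (6*j+8) * (a j t) * (a (j+1) t) := by
  subst hl
  have hμ' : μ ≠ 0 := ne_of_gt hμ
  induction m with
  | zero =>
      simp [dyadRHS]
  | succ n ih =>
      rw [Finset.sum_range_succ, ih, Finset.sum_range_succ (f := fun j => μ ^ (6*j+6) * (a j t)^2),
        Finset.sum_range_succ (f := fun j => μ ^ (6*j+8) * (a j t) * (a (j+1) t)) (n := n+1)]
      have e1 : ((μ^8 : ℝ))^(n+1) = μ^(2*(n+1)) * μ^(6*n+6) := by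
        rw [← pow_mul, ← pow_add]; congr 1; ring
      have e2 : ((μ^8 : ℝ))^(n+1+1) = μ^(2*(n+1)) * μ^(6*(n+1)+8) := by
        rw [← pow_mul, ← pow_add]; congr 1; ring
      simp only [dyadRHS, Nat.succ_ne_zero, if_false, Nat.add_sub_cancel]
      rw [e1, e2]
      field_simp
      ring

lemma le_mul_inv_of_mul_le {x c d : ℝ} (hd : 0 < d) (h : x * d ≤ c) : x ≤ c * d⁻¹ := by
  rw [← div_eq_mul_inv]
  exact (le_div_iff₀ hd).2 h

set_option maxHeartbeats 3200000 in
/-- Kiselev–Zlatoš: any nonzero `H^1` solution of the inviscid dyadic model blows up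
in finite time in `H^1`. -/
theorem inviscid_dyadic_blowup_H1 (lam : ℝ) (hlam : 1 < lam) (a : ℕ → ℝ → ℝ)
    (hsol : IsInviscidSol lam a)
    (hinit : Hsq lam 1 (fun j => a j 0) < ⊤)
    (hne : ∃ j : ℕ, a j 0 ≠ 0) :
    ∃ T : ℝ, 0 < T ∧ (⨆ t ∈ Set.Ico (0 : ℝ) T, Hsq lam 1 (fun j => a j t)) = ⊤ := by
  classical
  by_contra hcon
  push_neg at hcon
  have hlam0 : (0:ℝ) < lam := lt_trans one_pos hlam
  set μ : ℝ := lam ^ ((8:ℝ)⁻¹) with hμdef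
  have hμ1 : 1 < μ := by
    rw [hμdef, Real.one_lt_rpow_iff_of_pos hlam0]
    exact Or.inl ⟨hlam, by norm_num⟩
  have hμ0 : 0 < μ := lt_trans one_pos hμ1
  have hμ8 : lam = μ ^ (8:ℕ) := by
    rw [hμdef, ← Real.rpow_natCast (lam ^ ((8:ℝ)⁻¹)) 8, ← Real.rpow_mul hlam0.le]
    norm_num
  have hder : ∀ j : ℕ, ∀ t ∈ Set.Ici (0:ℝ),
      HasDerivWithinAt (a j) (dyadRHS lam a j t) (Set.Ici 0) t :=
    fun j t ht => hsol j t ht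
  -- rpow to pow conversion
  have hpow2 : ∀ x : ℝ, x ^ (2*(1:ℝ)) = x^(2:ℕ) := by
    intro x
    rw [show (2*(1:ℝ)) = ((2:ℕ):ℝ) by norm_num, Real.rpow_natCast]
  -- initial energy
  have hfin : (∑' j : ℕ, ENNReal.ofReal ((lam ^ j) ^ (2*(1:ℝ)) * (a j 0) ^ 2)) ≠ ⊤ := by
    exact hinit.ne
  have hsumg : Summable (fun j : ℕ => (lam ^ j) ^ (2:ℕ) * (a j 0) ^ 2) := by
    have h2 := ENNReal.summable_toReal hfin
    have he : (fun j : ℕ => (ENNReal.ofReal ((lam ^ j) ^ (2*(1:ℝ)) * (a j 0) ^ 2)).toReal)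
        = fun j : ℕ => (lam ^ j) ^ (2:ℕ) * (a j 0) ^ 2 := by
      funext j
      rw [ENNReal.toReal_ofReal (by positivity), hpow2]
    rwa [he] at h2
  have hsum0 : Summable (fun j : ℕ => (a j 0)^2) := by
    refine Summable.of_nonneg_of_le (fun j => sq_nonneg _) (fun j => ?_) hsumg
    have h1 : (1:ℝ) ≤ (lam ^ j) ^ (2:ℕ) := one_le_pow₀ (one_le_pow₀ hlam.le)
    nlinarith [sq_nonneg (a j 0)]
  set E0 : ℝ := ∑' j, (a j 0)^2 with hE0def
  have hE0pos : 0 < E0 := by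
    obtain ⟨J, hJ⟩ := hne
    have h1 : (a J 0)^2 ≤ E0 := hsum0.le_tsum J (fun i _ => sq_nonneg _)
    have h2 : 0 < (a J 0)^2 := lt_of_le_of_ne (sq_nonneg _) (Ne.symm (pow_ne_zero 2 hJ))
    linarith
  have hpart_le : ∀ n, ∑ j ∈ Finset.range n, (a j 0)^2 ≤ E0 :=
    fun n => hsum0.sum_le_tsum (Finset.range n) (fun i _ => sq_nonneg _)
  -- constants
  set γ : ℝ := μ - 1 with hγdef
  have hγ0 : 0 < γ := by rw [hγdef]; linarith
  have hμ2gt : 1 < μ^(2:ℕ) := one_lt_pow₀ hμ1 (by norm_num)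
  have hμ2inv0 : 0 ≤ (μ^(2:ℕ))⁻¹ := by positivity
  have hμ2inv1 : (μ^(2:ℕ))⁻¹ < 1 := by
    rw [inv_lt_one_iff₀]; exact Or.inr hμ2gt
  set S : ℝ := (1 - (μ^(2:ℕ))⁻¹)⁻¹ with hSdef
  have hS0 : 0 < S := by
    rw [hSdef]; exact inv_pos.2 (by linarith)
  set R : ℝ := S * (E0 + 2) with hRdef
  have hR0 : 0 < R := by
    rw [hRdef]; positivity
  set tst : ℝ := 4*(R+1)/(γ*E0) with htstdef
  have htst0 : 0 < tst := by
    rw [htstdef]; positivity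
  -- the H^1 bound on [0, tst]
  have hsupne := hcon (tst+1) (by linarith)
  set M : ℝ := (⨆ t ∈ Set.Ico (0:ℝ) (tst+1), Hsq lam 1 (fun j => a j t)).toReal with hMdef
  have hM0 : 0 ≤ M := ENNReal.toReal_nonneg
  set B : ℝ := M + 1 with hBdef
  have hB1 : 1 ≤ B := by rw [hBdef]; linarith
  have hB0 : 0 < B := by linarith
  have hterm : ∀ t, t ∈ Set.Icc (0:ℝ) tst → ∀ j : ℕ, (lam ^ j)^(2:ℕ) * (a j t)^2 ≤ M := by
    intro t ht j
    have htIco : t ∈ Set.Ico (0:ℝ) (tst+1) := ⟨ht.1, by linarith [ht.2]⟩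
    have hle1 : Hsq lam 1 (fun j => a j t)
        ≤ ⨆ t ∈ Set.Ico (0:ℝ) (tst+1), Hsq lam 1 (fun j => a j t) :=
      le_biSup (f := fun t => Hsq lam 1 (fun j => a j t)) htIco
    have hle2 : ENNReal.ofReal ((lam ^ j) ^ (2*(1:ℝ)) * (a j t)^2)
        ≤ Hsq lam 1 (fun j => a j t) := ENNReal.le_tsum j
    have h3 := le_trans hle2 hle1
    rw [ENNReal.ofReal_le_iff_le_toReal hsupne] at h3
    rw [← hpow2]
    exact h3
  have hB2 : ∀ t, t ∈ Set.Icc (0:ℝ) tst → ∀ j : ℕ, μ^(16*j) * (a j t)^2 ≤ B^2 := by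
    intro t ht j
    have h1 := hterm t ht j
    have he : (lam^j)^(2:ℕ) = μ^(16*j) := by
      rw [hμ8, ← pow_mul, ← pow_mul]; congr 1; ring
    rw [he] at h1
    nlinarith [hM0]
  have hB : ∀ t, t ∈ Set.Icc (0:ℝ) tst → ∀ j : ℕ, μ^(8*j) * |a j t| ≤ B := by
    intro t ht j
    have h1 := hB2 t ht j
    have he : μ^(16*j) * (a j t)^2 = (μ^(8*j) * |a j t|)^2 := by
      rw [mul_pow, sq_abs, ← pow_mul]; congr 2; ring
    rw [he] at h1
    have hx0 : 0 ≤ μ^(8*j) * |a j t| := by positivity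
    nlinarith [sq_nonneg (μ^(8*j) * |a j t| - B)]
  clear_value μ E0 γ S R tst M B
  -- inverse power conversion
  have convN : ∀ (c k : ℕ), (((μ^c)⁻¹ : ℝ))^k = (μ^(c*k))⁻¹ := by
    intro c k
    rw [inv_pow, ← pow_mul]
  -- eventualities
  have h16inv0 : (0:ℝ) ≤ (μ^(16:ℕ))⁻¹ := by positivity
  have h16inv1 : ((μ^(16:ℕ))⁻¹ : ℝ) < 1 := by
    rw [inv_lt_one_iff₀]; exact Or.inr (one_lt_pow₀ hμ1 (by norm_num))
  have h10inv0 : (0:ℝ) ≤ (μ^(10:ℕ))⁻¹ := by positivity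
  have h10inv1 : ((μ^(10:ℕ))⁻¹ : ℝ) < 1 := by
    rw [inv_lt_one_iff₀]; exact Or.inr (one_lt_pow₀ hμ1 (by norm_num))
  have htd16 : Tendsto (fun N : ℕ => 2*B^3*((μ^(16:ℕ))⁻¹)^N * tst) atTop (nhds 0) := by
    have h := tendsto_pow_atTop_nhds_zero_of_lt_one h16inv0 h16inv1
    simpa using (h.const_mul (2*B^3)).mul_const tst
  have htd10 : Tendsto (fun N : ℕ => 2*B^2*((μ^(10:ℕ))⁻¹)^N) atTop (nhds 0) := by
    have h := tendsto_pow_atTop_nhds_zero_of_lt_one h10inv0 h10inv1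
    simpa using h.const_mul (2*B^2)
  have htdE : Tendsto (fun n : ℕ => ∑ j ∈ Finset.range (n+1), (a j 0)^2) atTop (nhds E0) := by
    have h := hsum0.hasSum.tendsto_sum_nat
    rw [hE0def]
    exact h.comp (tendsto_add_atTop_nat 1)
  have ev1 : ∀ᶠ N : ℕ in atTop, E0 - E0/4 ≤ ∑ j ∈ Finset.range (N+1), (a j 0)^2 :=
    htdE.eventually (eventually_ge_nhds (by linarith))
  have ev2 : ∀ᶠ N : ℕ in atTop, 2*B^3*((μ^(16:ℕ))⁻¹)^N * tst ≤ E0/8 :=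
    htd16.eventually (eventually_le_nhds (by positivity))
  have ev3 : ∀ᶠ N : ℕ in atTop, 2*B^2*((μ^(10:ℕ))⁻¹)^N ≤ γ*E0/8 :=
    htd10.eventually (eventually_le_nhds (by positivity))
  have ev4 : ∀ᶠ N : ℕ in atTop, 2*B^3*((μ^(16:ℕ))⁻¹)^(N+1) * tst ≤ 1 := by
    have h := htd16.comp (tendsto_add_atTop_nat 1)
    exact h.eventually (eventually_le_nhds (by norm_num))
  obtain ⟨N, hN⟩ := (((ev1.and ev2).and ev3).and ev4).exists
  obtain ⟨⟨⟨hN1, hN2⟩, hN3⟩, hN4⟩ := hN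
  rw [convN] at hN2 hN4
  rw [convN] at hN3
  -- flux bounds for the truncated energies
  have hflux : ∀ (m : ℕ), ∀ s ∈ Set.Icc (0:ℝ) tst,
      |∑ j ∈ Finset.range (m+1), 2 * a j s * dyadRHS lam a j s| ≤ 2*B^3*(μ^(16*m))⁻¹ := by
    intro m s hs
    rw [sumE_eq, abs_neg]
    have h1 := hB s hs (m+1)
    have h2 := hB2 s hs m
    have hprod : μ^(16*m)*(a m s)^2 * (μ^(8*(m+1)) * |a (m+1) s|) ≤ B^2 * B :=
      mul_le_mul h2 h1 (by positivity) (by positivity)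
    refine le_mul_inv_of_mul_le (by positivity) ?_
    have habs : |2 * lam ^ (m+1) * (a m s)^2 * a (m+1) s|
        = 2 * lam ^ (m+1) * (a m s)^2 * |a (m+1) s| := by
      rw [abs_mul]
      congr 1
      exact abs_of_nonneg (by positivity)
    rw [habs, hμ8, ← pow_mul]
    nlinarith [hprod]
  -- derivative of truncated energy
  have hlin : ∀ (L : ℝ) (u : ℝ), HasDerivWithinAt (fun x : ℝ => L*x) L (Set.Ici 0) u := by
    intro L u
    simpa using (hasDerivWithinAt_id u (Set.Ici 0)).const_mul L
  have hEder : ∀ (m : ℕ), ∀ s ∈ Set.Ici (0:ℝ),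
      HasDerivWithinAt (fun u => ∑ j ∈ Finset.range (m+1), (a j u)^2)
        (∑ j ∈ Finset.range (m+1), 2 * a j s * dyadRHS lam a j s) (Set.Ici 0) s := by
    intro m s hs
    refine HasDerivWithinAt.fun_sum (fun j _ => ?_)
    have h := (hder j s hs).fun_pow 2
    convert h using 1
    · rfl
    push_cast
    ring
  -- lower bound for truncated energy at level N+1
  have hElow : ∀ s ∈ Set.Icc (0:ℝ) tst,
      E0 - E0/4 - E0/8 ≤ ∑ j ∈ Finset.range (N+1), (a j s)^2 := by
    intro s hs
    have hL0 : (0:ℝ) ≤ 2*B^3*(μ^(16*N))⁻¹ := by positivity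
    have key : (0:ℝ) * s ≤ ((∑ j ∈ Finset.range (N+1), (a j s)^2) + (2*B^3*(μ^(16*N))⁻¹)*s)
        - ((∑ j ∈ Finset.range (N+1), (a j 0)^2) + (2*B^3*(μ^(16*N))⁻¹)*0) := by
      refine mvd_ge (f := fun u => (∑ j ∈ Finset.range (N+1), (a j u)^2) + (2*B^3*(μ^(16*N))⁻¹)*u)
        (f' := fun u => (∑ j ∈ Finset.range (N+1), 2 * a j u * dyadRHS lam a j u) + 2*B^3*(μ^(16*N))⁻¹)
        hs.1 ?_ ?_
      · intro u hu
        exact HasDerivWithinAt.add (hEder N u hu.1) (hlin _ u)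
      · intro u hu
        have hu' : u ∈ Set.Icc (0:ℝ) tst := ⟨hu.1, le_trans hu.2 hs.2⟩
        have := abs_le.1 (hflux N u hu')
        linarith [this.1]
    have hLs : (2*B^3*(μ^(16*N))⁻¹)*s ≤ (2*B^3*(μ^(16*N))⁻¹)*tst :=
      mul_le_mul_of_nonneg_left hs.2 hL0
    have hmul : (2*B^3*(μ^(16*N))⁻¹)*tst ≤ E0/8 := hN2
    have h0 := hN1
    simp only [mul_zero, add_zero, zero_mul] at key
    linarith
  -- upper bound for truncated energy at level N+2
  have hEup : ∀ s ∈ Set.Icc (0:ℝ) tst,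
      ∑ j ∈ Finset.range (N+1+1), (a j s)^2 ≤ E0 + 1 := by
    intro s hs
    have hL0 : (0:ℝ) ≤ 2*B^3*(μ^(16*(N+1)))⁻¹ := by positivity
    have key : (0:ℝ) * s ≤ ((2*B^3*(μ^(16*(N+1)))⁻¹)*s - ∑ j ∈ Finset.range (N+1+1), (a j s)^2)
        - ((2*B^3*(μ^(16*(N+1)))⁻¹)*0 - ∑ j ∈ Finset.range (N+1+1), (a j 0)^2) := by
      refine mvd_ge (f := fun u => (2*B^3*(μ^(16*(N+1)))⁻¹)*u - ∑ j ∈ Finset.range (N+1+1), (a j u)^2)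
        (f' := fun u => 2*B^3*(μ^(16*(N+1)))⁻¹ - ∑ j ∈ Finset.range (N+1+1), 2 * a j u * dyadRHS lam a j u)
        hs.1 ?_ ?_
      · intro u hu
        exact HasDerivWithinAt.sub (hlin _ u) (hEder (N+1) u hu.1)
      · intro u hu
        have hu' : u ∈ Set.Icc (0:ℝ) tst := ⟨hu.1, le_trans hu.2 hs.2⟩
        have := abs_le.1 (hflux (N+1) u hu')
        linarith [this.2]
    have hLs : (2*B^3*(μ^(16*(N+1)))⁻¹)*s ≤ (2*B^3*(μ^(16*(N+1)))⁻¹)*tst :=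
      mul_le_mul_of_nonneg_left hs.2 hL0
    have h4 : (2*B^3*(μ^(16*(N+1)))⁻¹)*tst ≤ 1 := hN4
    have hp := hpart_le (N+1+1)
    simp only [mul_zero, zero_mul, zero_sub, sub_zero] at key
    linarith
  -- the P functional: derivative
  have hPder : ∀ s ∈ Set.Ici (0:ℝ),
      HasDerivWithinAt (fun u => ∑ k ∈ Finset.range (N+1+1), (μ^(2*k))⁻¹ * a k u)
        (∑ k ∈ Finset.range (N+1+1), (μ^(2*k))⁻¹ * dyadRHS lam a k s) (Set.Ici 0) s := by
    intro s hs
    exact HasDerivWithinAt.fun_sum (fun k _ => (hder k s hs).const_mul _)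
  -- lower bound on the derivative of P
  have hPlow : ∀ s ∈ Set.Icc (0:ℝ) tst,
      γ*E0/2 ≤ ∑ k ∈ Finset.range (N+1+1), (μ^(2*k))⁻¹ * dyadRHS lam a k s := by
    intro s hs
    rw [sumP_eq μ lam hμ0 hμ8 a (N+1) s]
    -- pointwise AM-GM on the cross terms
    have hcross : ∀ j : ℕ, μ^(6*j+8) * (a j s) * (a (j+1) s)
        ≤ (μ^(6*j+5) * (a j s)^2 + μ^(6*j+11) * (a (j+1) s)^2)/2 := by
      intro j
      have e1 : (μ:ℝ)^(6*j+8) = μ^(6*j+5)*μ^3 := by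
        rw [← pow_add]
      have e2 : (μ:ℝ)^(6*j+11) = μ^(6*j+5)*μ^6 := by
        rw [← pow_add]
      rw [e1, e2]
      nlinarith [mul_nonneg (pow_pos hμ0 (6*j+5)).le (sq_nonneg (a j s - μ^3 * a (j+1) s))]
    have hc0 : ∑ j ∈ Finset.range (N+1+1), μ^(6*j+8) * (a j s) * (a (j+1) s)
        ≤ ((∑ j ∈ Finset.range (N+1+1), μ^(6*j+5) * (a j s)^2)
           + ∑ j ∈ Finset.range (N+1+1), μ^(6*j+11) * (a (j+1) s)^2)/2 := by
      rw [← Finset.sum_add_distrib, Finset.sum_div]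
      exact Finset.sum_le_sum (fun j _ => hcross j)
    -- shift the second cross sum
    have hshift : ∑ j ∈ Finset.range (N+1+1), μ^(6*j+11) * (a (j+1) s)^2
        ≤ ∑ j ∈ Finset.range (N+1+1+1), μ^(6*j+5) * (a j s)^2 := by
      have h := Finset.sum_range_succ' (fun j => μ^(6*j+5) * (a j s)^2) (N+1+1)
      have he : ∀ i : ℕ, μ^(6*(i+1)+5) * (a (i+1) s)^2 = μ^(6*i+11) * (a (i+1) s)^2 := by
        intro i
        rw [show 6*(i+1)+5 = 6*i+11 by omega]
      rw [Finset.sum_congr rfl (fun i _ => he i)] at h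
      have h0 : (0:ℝ) ≤ μ^(6*0+5) * (a 0 s)^2 := by positivity
      linarith [h.le, h.ge]
    have hsub : ∑ j ∈ Finset.range (N+1+1), μ^(6*j+5) * (a j s)^2
        ≤ ∑ j ∈ Finset.range (N+1+1+1), μ^(6*j+5) * (a j s)^2 := by
      refine Finset.sum_le_sum_of_subset_of_nonneg (Finset.range_subset_range.2 (by omega)) ?_
      intro i _ _
      positivity
    have hc1 : ∑ j ∈ Finset.range (N+1+1), μ^(6*j+8) * (a j s) * (a (j+1) s)
        ≤ ∑ j ∈ Finset.range (N+1+1+1), μ^(6*j+5) * (a j s)^2 := by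
      linarith
    -- split the top two terms
    have hsplit : ∑ j ∈ Finset.range (N+1+1+1), μ^(6*j+5) * (a j s)^2
        = (∑ j ∈ Finset.range (N+1), μ^(6*j+5) * (a j s)^2)
          + μ^(6*(N+1)+5) * (a (N+1) s)^2 + μ^(6*(N+1+1)+5) * (a (N+1+1) s)^2 := by
      rw [Finset.sum_range_succ, Finset.sum_range_succ]
    -- error terms
    have herr1 : μ^(6*(N+1)+5) * (a (N+1) s)^2 ≤ B^2 * (μ^(10*N))⁻¹ := by
      refine le_mul_inv_of_mul_le (by positivity) ?_
      have h2 := hB2 s hs (N+1)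
      have e : (μ:ℝ)^(6*(N+1)+5) * μ^(10*N) ≤ μ^(16*(N+1)) := by
        rw [← pow_add]
        exact pow_le_pow_right₀ hμ1.le (by omega)
      calc μ^(6*(N+1)+5) * (a (N+1) s)^2 * μ^(10*N)
          = (μ^(6*(N+1)+5) * μ^(10*N)) * (a (N+1) s)^2 := by ring
        _ ≤ μ^(16*(N+1)) * (a (N+1) s)^2 := mul_le_mul_of_nonneg_right e (sq_nonneg _)
        _ ≤ B^2 := h2
    have herr2 : μ^(6*(N+1+1)+5) * (a (N+1+1) s)^2 ≤ B^2 * (μ^(10*N))⁻¹ := by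
      refine le_mul_inv_of_mul_le (by positivity) ?_
      have h2 := hB2 s hs (N+1+1)
      have e : (μ:ℝ)^(6*(N+1+1)+5) * μ^(10*N) ≤ μ^(16*(N+1+1)) := by
        rw [← pow_add]
        exact pow_le_pow_right₀ hμ1.le (by omega)
      calc μ^(6*(N+1+1)+5) * (a (N+1+1) s)^2 * μ^(10*N)
          = (μ^(6*(N+1+1)+5) * μ^(10*N)) * (a (N+1+1) s)^2 := by ring
        _ ≤ μ^(16*(N+1+1)) * (a (N+1+1) s)^2 := mul_le_mul_of_nonneg_right e (sq_nonneg _)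
        _ ≤ B^2 := h2
    -- diagonal gain
    have hdiag : γ * ∑ j ∈ Finset.range (N+1), (a j s)^2
        ≤ (∑ j ∈ Finset.range (N+1), μ^(6*j+6) * (a j s)^2)
          - ∑ j ∈ Finset.range (N+1), μ^(6*j+5) * (a j s)^2 := by
      rw [Finset.mul_sum, ← Finset.sum_sub_distrib]
      refine Finset.sum_le_sum (fun j _ => ?_)
      have e : (μ:ℝ)^(6*j+6) = μ^(6*j+5)*μ := by
        rw [← pow_succ]
      have h1 : (1:ℝ) ≤ μ^(6*j+5) := one_le_pow₀ hμ1.le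
      have hco : γ ≤ μ^(6*j+6) - μ^(6*j+5) := by
        rw [e, hγdef]
        nlinarith
      nlinarith [sq_nonneg (a j s), hco]
    have hEn := hElow s hs
    have hγE : γ * (E0 - E0/4 - E0/8) ≤ γ * ∑ j ∈ Finset.range (N+1), (a j s)^2 :=
      mul_le_mul_of_nonneg_left hEn hγ0.le
    have herr3 : (2:ℝ)*B^2*(μ^(10*N))⁻¹ ≤ γ*E0/8 := hN3
    linarith [hc1, hsplit.le, hsplit.ge, herr1, herr2, hdiag, hγE, herr3]
  -- uniform bound on P
  have hPabs : ∀ t ∈ Set.Icc (0:ℝ) tst,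
      |∑ k ∈ Finset.range (N+1+1), (μ^(2*k))⁻¹ * a k t| ≤ R := by
    intro t ht
    have hEm := hEup t ht
    have haj : ∀ k ∈ Finset.range (N+1+1), |a k t| ≤ E0 + 2 := by
      intro k hk
      have h1 : (a k t)^2 ≤ ∑ j ∈ Finset.range (N+1+1), (a j t)^2 :=
        Finset.single_le_sum (f := fun j => (a j t)^2) (fun i _ => sq_nonneg _) hk
      nlinarith [sq_abs (a k t), sq_nonneg (|a k t| - 1), abs_nonneg (a k t)]
    calc |∑ k ∈ Finset.range (N+1+1), (μ^(2*k))⁻¹ * a k t|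
        ≤ ∑ k ∈ Finset.range (N+1+1), |(μ^(2*k))⁻¹ * a k t| :=
          Finset.abs_sum_le_sum_abs _ _
      _ ≤ ∑ k ∈ Finset.range (N+1+1), (μ^(2*k))⁻¹ * (E0+2) := by
          refine Finset.sum_le_sum (fun k hk => ?_)
          rw [abs_mul, abs_of_nonneg (by positivity : (0:ℝ) ≤ (μ^(2*k))⁻¹)]
          exact mul_le_mul_of_nonneg_left (haj k hk) (by positivity)
      _ = (∑ k ∈ Finset.range (N+1+1), ((μ^(2:ℕ))⁻¹)^k) * (E0+2) := by
          rw [← Finset.sum_mul]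
          congr 1
          exact Finset.sum_congr rfl (fun k _ => (convN 2 k).symm)
      _ ≤ S * (E0+2) := by
          refine mul_le_mul_of_nonneg_right ?_ (by linarith)
          rw [hSdef]
          exact geom_sum_le_inv hμ2inv0 hμ2inv1 _
      _ = R := hRdef.symm
  -- conclusion
  have hmvd : (γ*E0/2) * tst ≤ (∑ k ∈ Finset.range (N+1+1), (μ^(2*k))⁻¹ * a k tst)
      - (∑ k ∈ Finset.range (N+1+1), (μ^(2*k))⁻¹ * a k 0) := by
    refine mvd_ge (f := fun u => ∑ k ∈ Finset.range (N+1+1), (μ^(2*k))⁻¹ * a k u)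
      (f' := fun s => ∑ k ∈ Finset.range (N+1+1), (μ^(2*k))⁻¹ * dyadRHS lam a k s)
      htst0.le ?_ hPlow
    intro s hs
    exact hPder s hs.1
  have heq : (γ*E0/2) * tst = 2*(R+1) := by
    rw [htstdef]
    field_simp
    ring
  rw [heq] at hmvd
  have h1 := abs_le.1 (hPabs tst ⟨htst0.le, le_refl _⟩)
  have h2 := abs_le.1 (hPabs 0 ⟨le_refl _, htst0.le⟩)
  linarith [h1.2, h2.1, hR0]
end

section
/- Let {a_j} be a positive solution of the inviscid dyadic model on [0,∞) (i.e. a_j(t) > 0 for all j ≥ 0 and t ≥ 0) whose initial data is componentwise positive and bounded: sup_{j≥0} a_j(0) < ∞. Then the energy is finite for all positive time: for every t > 0, Σ_{j≥0} a_j(t)² < ∞. -/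
open MeasureTheory Filter
open scoped ENNReal

namespace InviscidAux

open Set intervalIntegral

variable {lam : ℝ} {a : ℕ → ℝ → ℝ}

lemma sol_cont (hsol : IsInviscidSol lam a) (n : ℕ) : ContinuousOn (a n) (Set.Ici 0) :=
  fun t ht => (hsol n t ht).continuousWithinAt

lemma sol_hda (hsol : IsInviscidSol lam a) (n : ℕ) {t : ℝ} (ht : 0 < t) :
    HasDerivAt (a n)
      (lam ^ n * (if n = 0 then (0 : ℝ) else a (n - 1) t) ^ 2
        - lam ^ (n + 1) * a n t * a (n + 1) t) t :=
  (hsol n t (le_of_lt ht)).hasDerivAt (Ici_mem_nhds ht)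

/-- the derivative of the partial energy telescopes -/
lemma energy_hda (hsol : IsInviscidSol lam a) (N : ℕ) {t : ℝ} (ht : 0 < t) :
    HasDerivAt (fun s => ∑ j ∈ Finset.range (N + 1), a j s ^ 2)
      (-(2 * lam ^ (N + 1) * a N t ^ 2 * a (N + 1) t)) t := by
  induction N with
  | zero =>
    have h : HasDerivAt (fun s => a 0 s ^ 2) _ t := (sol_hda hsol 0 ht).fun_pow 2
    simp only [zero_add, Finset.sum_range_one]
    convert h using 1
    norm_num
    ring
  | succ N ih =>
    have h : HasDerivAt (fun s => a (N + 1) s ^ 2) _ t := (sol_hda hsol (N + 1) ht).fun_pow 2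
    have hadd : HasDerivAt (fun s => ∑ j ∈ Finset.range (N + 1), a j s ^ 2 + a (N + 1) s ^ 2) _ t :=
      ih.fun_add h
    simp only [← Finset.sum_range_succ] at hadd
    convert hadd using 1
    simp only [Nat.succ_ne_zero, if_false, Nat.add_sub_cancel]
    push_cast
    ring


lemma energy_cont (hsol : IsInviscidSol lam a) (N : ℕ) :
    ContinuousOn (fun s => ∑ j ∈ Finset.range (N + 1), a j s ^ 2) (Set.Ici 0) := by
  apply continuousOn_finset_sum
  intro j _
  exact (sol_cont hsol j).pow 2

lemma energy_anti (hsol : IsInviscidSol lam a) (hlam : 1 < lam)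
    (hpos : ∀ j : ℕ, ∀ t : ℝ, 0 ≤ t → 0 < a j t) (N : ℕ) :
    AntitoneOn (fun s => ∑ j ∈ Finset.range (N + 1), a j s ^ 2) (Set.Ici 0) := by
  have hlam0 : (0:ℝ) < lam := lt_trans one_pos hlam
  apply antitoneOn_of_deriv_nonpos (convex_Ici 0) (energy_cont hsol N)
  · intro x hx
    rw [interior_Ici] at hx
    exact ((energy_hda hsol N hx).differentiableAt).differentiableWithinAt
  · intro x hx
    rw [interior_Ici] at hx
    rw [(energy_hda hsol N hx).deriv]
    have h1 : 0 ≤ a N x ^ 2 := sq_nonneg _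
    have h2 : 0 < a (N + 1) x := hpos (N + 1) x (le_of_lt hx)
    have h3 : 0 < lam ^ (N + 1) := pow_pos hlam0 _
    nlinarith [mul_nonneg (mul_nonneg h3.le h1) h2.le]

lemma energy_init_le (hpos : ∀ j : ℕ, ∀ t : ℝ, 0 ≤ t → 0 < a j t)
    {M : ℝ} (hM : ∀ j, a j 0 ≤ M) (N : ℕ) :
    ∑ j ∈ Finset.range (N + 1), a j 0 ^ 2 ≤ ((N : ℝ) + 1) * M ^ 2 := by
  have : ∀ j ∈ Finset.range (N + 1), a j 0 ^ 2 ≤ M ^ 2 := by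
    intro j _
    have h1 := hpos j 0 le_rfl
    have h2 := hM j
    nlinarith
  calc ∑ j ∈ Finset.range (N + 1), a j 0 ^ 2 ≤ ∑ _j ∈ Finset.range (N + 1), M ^ 2 :=
        Finset.sum_le_sum this
    _ = ((N : ℝ) + 1) * M ^ 2 := by
        rw [Finset.sum_const, Finset.card_range]
        push_cast
        ring

/-- a priori linear bound on each mode, valid for all times -/
lemma apriori (hsol : IsInviscidSol lam a) (hlam : 1 < lam)
    (hpos : ∀ j : ℕ, ∀ t : ℝ, 0 ≤ t → 0 < a j t)
    {M : ℝ} (hM : ∀ j, a j 0 ≤ M) (n : ℕ) {s : ℝ} (hs : 0 ≤ s) :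
    a n s ≤ M * ((n : ℝ) + 1) := by
  have hM0 : 0 < M := lt_of_lt_of_le (hpos 0 0 le_rfl) (hM 0)
  have h1 : a n s ^ 2 ≤ ∑ j ∈ Finset.range (n + 1), a j s ^ 2 :=
    Finset.single_le_sum (f := fun j => a j s ^ 2) (fun j _ => sq_nonneg _)
      (Finset.self_mem_range_succ n)
  have h2 : ∑ j ∈ Finset.range (n + 1), a j s ^ 2 ≤ ∑ j ∈ Finset.range (n + 1), a j 0 ^ 2 :=
    energy_anti hsol hlam hpos n Set.self_mem_Ici hs hs
  have h3 := energy_init_le hpos hM n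
  have h4 : 0 < a n s := hpos n s hs
  have h5 : (0:ℝ) ≤ (n : ℝ) := Nat.cast_nonneg n
  have h6 : (0:ℝ) ≤ (n:ℝ) * ((n:ℝ) + 1) * M ^ 2 := by positivity
  have h7 : 0 < M * ((n:ℝ) + 1) := by positivity
  nlinarith


lemma contOn_Ioi (hsol : IsInviscidSol lam a) (n : ℕ) : ContinuousOn (a n) (Set.Ioi 0) :=
  (sol_cont hsol n).mono Set.Ioi_subset_Ici_self

lemma uIcc_subset_Ioi {r s : ℝ} (hr : 0 < r) (hs : 0 < s) : Set.uIcc r s ⊆ Set.Ioi (0:ℝ) :=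
  fun x hx => lt_of_lt_of_le (lt_min hr hs) hx.1

lemma energy_nonneg (s : ℝ) (N : ℕ) : 0 ≤ ∑ j ∈ Finset.range (N + 1), a j s ^ 2 :=
  Finset.sum_nonneg fun j _ => sq_nonneg _

/-- integral flux bound coming from monotone partial energies -/
lemma flux_bound (hsol : IsInviscidSol lam a) (hlam : 1 < lam)
    (hpos : ∀ j : ℕ, ∀ t : ℝ, 0 ≤ t → 0 < a j t)
    {M : ℝ} (hM : ∀ j, a j 0 ≤ M) {τ t : ℝ} (hτ : 0 < τ) (hτt : τ ≤ t) (n : ℕ) :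
    2 * lam ^ (n+1) * ∫ s in τ..t, (a n s)^2 * a (n+1) s ≤ ((n:ℝ) + 1) * M ^ 2 := by
  have huIcc : Set.uIcc τ t = Set.Icc τ t := Set.uIcc_of_le hτt
  have hsub : Set.Icc τ t ⊆ Set.Ici (0:ℝ) := fun x hx => le_trans hτ.le hx.1
  have hcont : ContinuousOn (fun s => (a n s)^2 * a (n+1) s) (Set.Icc τ t) :=
    (((sol_cont hsol n).mono hsub).pow 2).mul ((sol_cont hsol (n+1)).mono hsub)
  have hint : IntervalIntegrable (fun s => -(2 * lam ^ (n+1) * a n s ^ 2 * a (n+1) s))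
      volume τ t := by
    apply ContinuousOn.intervalIntegrable
    rw [huIcc]
    have : (fun s => -(2 * lam ^ (n+1) * a n s ^ 2 * a (n+1) s))
        = fun s => -(2 * lam ^ (n+1)) * ((a n s)^2 * a (n+1) s) := by
      funext s; ring
    rw [this]
    exact continuousOn_const.mul hcont
  have hft := intervalIntegral.integral_eq_sub_of_hasDerivAt
      (f := fun s => ∑ j ∈ Finset.range (n+1), a j s ^ 2)
      (f' := fun s => -(2 * lam ^ (n+1) * a n s ^ 2 * a (n+1) s))
      (fun x hx => energy_hda hsol n (lt_of_lt_of_le hτ (huIcc ▸ hx).1)) hint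
  have hval : ∫ s in τ..t, -(2 * lam ^ (n+1) * a n s ^ 2 * a (n+1) s)
      = -(2 * lam ^ (n+1)) * ∫ s in τ..t, (a n s)^2 * a (n+1) s := by
    rw [← intervalIntegral.integral_const_mul]
    apply intervalIntegral.integral_congr
    intro x _; ring
  have hEτ : ∑ j ∈ Finset.range (n+1), a j τ ^ 2 ≤ ∑ j ∈ Finset.range (n+1), a j 0 ^ 2 :=
    energy_anti hsol hlam hpos n Set.self_mem_Ici hτ.le hτ.le
  have hEt : 0 ≤ ∑ j ∈ Finset.range (n+1), a j t ^ 2 := energy_nonneg t n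
  have hE0 := energy_init_le hpos hM n
  rw [hval] at hft
  linarith


/-- Grönwall-type lower bound: recent flux from mode `n` keeps `a (n+1)` bounded below. -/
lemma gronwall_lower (hsol : IsInviscidSol lam a) (hlam : 1 < lam)
    (hpos : ∀ j : ℕ, ∀ t : ℝ, 0 ≤ t → 0 < a j t)
    {M : ℝ} (hM : ∀ j, a j 0 ≤ M) (n : ℕ) {r s : ℝ} (hr : 0 < r) (hrs : r ≤ s) :
    lam ^ (n+1) * Real.exp (-(lam ^ (n+2) * M * ((n:ℝ)+3)) * (s - r))
      * (∫ u in r..s, (a n u)^2) ≤ a (n+1) s := by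
  have hlam0 : (0:ℝ) < lam := lt_trans one_pos hlam
  have hM0 : 0 < M := lt_of_lt_of_le (hpos 0 0 le_rfl) (hM 0)
  have hs0 : 0 < s := lt_of_lt_of_le hr hrs
  set c : ℝ := lam ^ (n+2) * M * ((n:ℝ)+3) with hc
  have hc0 : 0 < c := by
    apply mul_pos (mul_pos (pow_pos hlam0 _) hM0)
    positivity
  set f : ℝ → ℝ := fun v => Real.exp (c*v) * (a n v)^2 with hfdef
  have hfc : ContinuousOn f (Set.Ioi 0) :=
    ((Real.continuous_exp.comp (continuous_const.mul continuous_id)).continuousOn).mul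
      ((contOn_Ioi hsol n).pow 2)
  have hfint : ∀ {u w : ℝ}, 0 < u → 0 < w → IntervalIntegrable f volume u w := fun hu hw =>
    (hfc.mono (uIcc_subset_Ioi hu hw)).intervalIntegrable
  have hG : ∀ u : ℝ, 0 < u → HasDerivAt (fun w => ∫ v in r..w, f v) (f u) u := by
    intro u hu
    exact intervalIntegral.integral_hasDerivAt_right (hfint hr hu)
      (hfc.stronglyMeasurableAtFilter isOpen_Ioi u hu)
      (hfc.continuousAt (isOpen_Ioi.mem_nhds hu))
  set F : ℝ → ℝ := fun w => Real.exp (c*w) * a (n+1) w - lam^(n+1) * ∫ v in r..w, f v with hFdef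
  have hFd : ∀ u ∈ Set.uIcc r s,
      HasDerivAt F (Real.exp (c*u) * a (n+1) u * (c - lam^(n+2) * a (n+2) u)) u := by
    intro u hu
    have hu0 : 0 < u := uIcc_subset_Ioi hr hs0 hu
    have hexp : HasDerivAt (fun w => Real.exp (c*w)) (Real.exp (c*u) * c) u := by
      simpa [Function.comp_def] using (Real.hasDerivAt_exp (c*u)).comp u ((hasDerivAt_id u).const_mul c)
    have h1 := hexp.fun_mul (sol_hda hsol (n+1) hu0)
    have h2 := (hG u hu0).const_mul (lam^(n+1))
    have h3 : HasDerivAt (fun w => Real.exp (c*w) * a (n+1) w - lam^(n+1) * ∫ v in r..w, f v) _ u :=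
      h1.fun_sub h2
    convert h3 using 1
    simp only [hfdef, Nat.succ_ne_zero, if_false, Nat.add_sub_cancel, hc]
    ring
  have hsub : Set.uIcc r s ⊆ Set.Ici (0:ℝ) := fun x hx => Set.mem_Ici.mpr (uIcc_subset_Ioi hr hs0 hx).le
  have hF'c : ContinuousOn
      (fun u => Real.exp (c*u) * a (n+1) u * (c - lam^(n+2) * a (n+2) u)) (Set.uIcc r s) := by
    apply ContinuousOn.mul
    · exact ((Real.continuous_exp.comp (continuous_const.mul continuous_id)).continuousOn).mul
        ((sol_cont hsol (n+1)).mono hsub)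
    · exact continuousOn_const.sub (continuousOn_const.mul ((sol_cont hsol (n+2)).mono hsub))
  have hkey := intervalIntegral.integral_eq_sub_of_hasDerivAt hFd hF'c.intervalIntegrable
  have hnn : 0 ≤ ∫ u in r..s, Real.exp (c*u) * a (n+1) u * (c - lam^(n+2) * a (n+2) u) := by
    apply intervalIntegral.integral_nonneg hrs
    intro x hx
    have hx0 : 0 < x := lt_of_lt_of_le hr hx.1
    have hb := apriori hsol hlam hpos hM (n+2) hx0.le
    have hcast : M * ((↑(n+2) : ℝ) + 1) = M * ((n:ℝ)+3) := by push_cast; ring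
    rw [hcast] at hb
    have hba : lam^(n+2) * a (n+2) x ≤ c := by
      rw [hc]
      calc lam^(n+2) * a (n+2) x ≤ lam^(n+2) * (M * ((n:ℝ)+3)) :=
            mul_le_mul_of_nonneg_left hb (pow_pos hlam0 _).le
        _ = lam ^ (n+2) * M * ((n:ℝ)+3) := by ring
    have h1 : 0 < a (n+1) x := hpos (n+1) x hx0.le
    have h2 : (0:ℝ) < Real.exp (c*x) := Real.exp_pos _
    exact mul_nonneg (mul_nonneg h2.le h1.le) (by linarith)
  have hFr : F r = Real.exp (c*r) * a (n+1) r := by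
    simp [hFdef, intervalIntegral.integral_same]
  have hFrpos : 0 ≤ F r := by
    rw [hFr]
    exact mul_nonneg (Real.exp_pos _).le (hpos (n+1) r hr.le).le
  have hFs : 0 ≤ F s := by linarith [hkey ▸ hnn]
  -- compare ∫ f with exp(c r) * ∫ a²
  have hsqint : ∀ {u w : ℝ}, 0 < u → 0 < w →
      IntervalIntegrable (fun v => (a n v)^2) volume u w := fun hu hw =>
    (((contOn_Ioi hsol n).pow 2).mono (uIcc_subset_Ioi hu hw)).intervalIntegrable
  have hconstint : IntervalIntegrable (fun v => Real.exp (c*r) * (a n v)^2) volume r s :=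
    (hsqint hr hs0).const_mul _
  have hmono : Real.exp (c*r) * ∫ u in r..s, (a n u)^2 ≤ ∫ v in r..s, f v := by
    rw [← intervalIntegral.integral_const_mul]
    apply intervalIntegral.integral_mono_on hrs hconstint (hfint hr hs0)
    intro x hx
    have hcx : c * r ≤ c * x := mul_le_mul_of_nonneg_left hx.1 hc0.le
    have := Real.exp_le_exp.mpr hcx
    show Real.exp (c*r) * a n x ^ 2 ≤ Real.exp (c*x) * a n x ^ 2
    exact mul_le_mul_of_nonneg_right this (sq_nonneg _)
  -- conclude
  have hchain : lam^(n+1) * (Real.exp (c*r) * ∫ u in r..s, (a n u)^2)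
      ≤ Real.exp (c*s) * a (n+1) s := by
    have h4 : lam^(n+1) * ∫ v in r..s, f v ≤ Real.exp (c*s) * a (n+1) s := by
      have : F s = Real.exp (c*s) * a (n+1) s - lam^(n+1) * ∫ v in r..s, f v := rfl
      linarith [hFs, this ▸ hFs]
    have h5 : 0 ≤ lam ^ (n+1) := (pow_pos hlam0 _).le
    nlinarith [hmono]
  have hcs : (0:ℝ) < Real.exp (c*s) := Real.exp_pos _
  rw [← mul_le_mul_iff_of_pos_right hcs]
  have e1 : Real.exp (-c*(s-r)) * Real.exp (c*s) = Real.exp (c*r) := by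
    rw [← Real.exp_add]; ring_nf
  calc lam ^ (n+1) * Real.exp (-c*(s-r)) * (∫ u in r..s, (a n u)^2) * Real.exp (c*s)
      = lam ^ (n+1) * ((Real.exp (-c*(s-r)) * Real.exp (c*s)) * ∫ u in r..s, (a n u)^2) := by
        ring
    _ = lam ^ (n+1) * (Real.exp (c*r) * ∫ u in r..s, (a n u)^2) := by rw [e1]
    _ ≤ Real.exp (c*s) * a (n+1) s := hchain
    _ = a (n+1) s * Real.exp (c*s) := by ring


/-- `∫ f·(∫f) = (∫f)²/2` for `f = aₙ²` -/
lemma window_sq (hsol : IsInviscidSol lam a) (n : ℕ) {r s : ℝ} (hr : 0 < r) (hrs : r ≤ s) :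
    2 * ∫ u in r..s, ((a n u)^2 * ∫ v in r..u, (a n v)^2)
      = (∫ u in r..s, (a n u)^2)^2 := by
  have hs0 : 0 < s := lt_of_lt_of_le hr hrs
  set g : ℝ → ℝ := fun v => (a n v)^2 with hgdef
  have hgc : ContinuousOn g (Set.Ioi 0) := (contOn_Ioi hsol n).pow 2
  have hgint : ∀ {u w : ℝ}, 0 < u → 0 < w → IntervalIntegrable g volume u w := fun hu hw =>
    (hgc.mono (uIcc_subset_Ioi hu hw)).intervalIntegrable
  set G : ℝ → ℝ := fun w => ∫ v in r..w, g v with hGdef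
  have hGd : ∀ u : ℝ, 0 < u → HasDerivAt G (g u) u := by
    intro u hu
    exact intervalIntegral.integral_hasDerivAt_right (hgint hr hu)
      (hgc.stronglyMeasurableAtFilter isOpen_Ioi u hu)
      (hgc.continuousAt (isOpen_Ioi.mem_nhds hu))
  have hGc : ContinuousOn G (Set.uIcc r s) := fun x hx =>
    ((hGd x (uIcc_subset_Ioi hr hs0 hx)).continuousAt).continuousWithinAt
  have hd : ∀ u ∈ Set.uIcc r s, HasDerivAt (fun w => G w ^ 2) (2 * (g u * G u)) u := by
    intro u hu
    have : HasDerivAt (fun w => G w ^ 2) _ u := (hGd u (uIcc_subset_Ioi hr hs0 hu)).fun_pow 2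
    convert this using 1
    push_cast
    ring
  have hint : IntervalIntegrable (fun u => 2 * (g u * G u)) volume r s := by
    apply ContinuousOn.intervalIntegrable
    exact continuousOn_const.mul ((hgc.mono (uIcc_subset_Ioi hr hs0)).mul hGc)
  have hkey := intervalIntegral.integral_eq_sub_of_hasDerivAt hd hint
  have hGr : G r = 0 := intervalIntegral.integral_same
  rw [intervalIntegral.integral_const_mul] at hkey
  rw [hkey, hGr]
  ring

/-- per-window lower bound on the flux -/
lemma window_flux (hsol : IsInviscidSol lam a) (hlam : 1 < lam)
    (hpos : ∀ j : ℕ, ∀ t : ℝ, 0 ≤ t → 0 < a j t)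
    {M : ℝ} (hM : ∀ j, a j 0 ≤ M) (n : ℕ) {r s : ℝ} (hr : 0 < r) (hrs : r ≤ s)
    (hlen : (lam ^ (n+2) * M * ((n:ℝ)+3)) * (s - r) ≤ 1) :
    lam ^ (n+1) * (∫ u in r..s, (a n u)^2)^2
      ≤ 2 * Real.exp 1 * ∫ u in r..s, ((a n u)^2 * a (n+1) u) := by
  have hlam0 : (0:ℝ) < lam := lt_trans one_pos hlam
  have hs0 : 0 < s := lt_of_lt_of_le hr hrs
  set c : ℝ := lam ^ (n+2) * M * ((n:ℝ)+3) with hc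
  have hM0 : 0 < M := lt_of_lt_of_le (hpos 0 0 le_rfl) (hM 0)
  have hc0 : 0 < c := by
    apply mul_pos (mul_pos (pow_pos hlam0 _) hM0)
    positivity
  have hsub := uIcc_subset_Ioi hr hs0
  have hgc : ContinuousOn (fun v => (a n v)^2) (Set.Ioi 0) := (contOn_Ioi hsol n).pow 2
  have hgint : ∀ {u w : ℝ}, 0 < u → 0 < w →
      IntervalIntegrable (fun v => (a n v)^2) volume u w := fun hu hw =>
    (hgc.mono (uIcc_subset_Ioi hu hw)).intervalIntegrable
  set G : ℝ → ℝ := fun w => ∫ v in r..w, (a n v)^2 with hGdef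
  have hGd : ∀ u : ℝ, 0 < u → HasDerivAt G ((a n u)^2) u := by
    intro u hu
    exact intervalIntegral.integral_hasDerivAt_right (hgint hr hu)
      (hgc.stronglyMeasurableAtFilter isOpen_Ioi u hu)
      (hgc.continuousAt (isOpen_Ioi.mem_nhds hu))
  have hGc : ContinuousOn G (Set.uIcc r s) := fun x hx =>
    ((hGd x (hsub hx)).continuousAt).continuousWithinAt
  -- pointwise comparison on [r,s]
  have hpt : ∀ x ∈ Set.Icc r s,
      lam ^ (n+1) * Real.exp (-1) * ((a n x)^2 * G x) ≤ (a n x)^2 * a (n+1) x := by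
    intro x hx
    have hx0 : 0 < x := lt_of_lt_of_le hr hx.1
    have hgl := gronwall_lower hsol hlam hpos hM n hr hx.1
    have hGnn : 0 ≤ G x := intervalIntegral.integral_nonneg hx.1 (fun u _ => sq_nonneg _)
    have hexp : Real.exp (-1) ≤ Real.exp (-c * (x - r)) := by
      apply Real.exp_le_exp.mpr
      have h1 : c * (x - r) ≤ c * (s - r) := by
        apply mul_le_mul_of_nonneg_left _ hc0.le
        linarith [hx.2]
      have h2 : c * (s - r) ≤ 1 := hlen
      linarith
    have step1 : lam ^ (n+1) * Real.exp (-1) * G x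
        ≤ lam ^ (n+1) * Real.exp (-c * (x - r)) * G x := by
      apply mul_le_mul_of_nonneg_right _ hGnn
      exact mul_le_mul_of_nonneg_left hexp (pow_pos hlam0 _).le
    have step2 : lam ^ (n+1) * Real.exp (-c * (x - r)) * G x ≤ a (n+1) x := hgl
    calc lam ^ (n+1) * Real.exp (-1) * ((a n x)^2 * G x)
        = (a n x)^2 * (lam ^ (n+1) * Real.exp (-1) * G x) := by ring
      _ ≤ (a n x)^2 * a (n+1) x := by
          apply mul_le_mul_of_nonneg_left _ (sq_nonneg _)
          linarith
  -- integrate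
  have hint1 : IntervalIntegrable
      (fun x => lam ^ (n+1) * Real.exp (-1) * ((a n x)^2 * G x)) volume r s := by
    apply ContinuousOn.intervalIntegrable
    exact continuousOn_const.mul ((hgc.mono hsub).mul hGc)
  have hint2 : IntervalIntegrable (fun x => (a n x)^2 * a (n+1) x) volume r s := by
    apply ContinuousOn.intervalIntegrable
    exact (hgc.mono hsub).mul ((contOn_Ioi hsol (n+1)).mono hsub)
  have hI := intervalIntegral.integral_mono_on hrs hint1 hint2 hpt
  rw [intervalIntegral.integral_const_mul] at hI
  have hws := window_sq hsol n hr hrs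
  -- hI : lam^(n+1) * exp(-1) * ∫ (a²·G) ≤ ∫ a²·a_{n+1}
  -- hws : 2 * ∫ (a²·G) = (∫ a²)²
  have hepos : (0:ℝ) < Real.exp 1 := Real.exp_pos _
  have hexp1 : Real.exp (-1) * Real.exp 1 = 1 := by
    rw [← Real.exp_add]; norm_num
  simp only [hGdef] at hI
  set X : ℝ := ∫ (x : ℝ) in r..s, a n x ^ 2 * ∫ (v : ℝ) in r..x, a n v ^ 2 with hX
  set Y : ℝ := ∫ (u : ℝ) in r..s, a n u ^ 2 * a (n + 1) u with hY
  have key : (2 * Real.exp 1) * (lam ^ (n+1) * Real.exp (-1) * X) = lam ^ (n+1) * (2 * X) := by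
    linear_combination (2 * lam ^ (n+1) * X) * hexp1
  calc lam ^ (n+1) * (∫ u in r..s, (a n u)^2)^2 = lam ^ (n+1) * (2 * X) := by rw [← hws]
    _ = (2 * Real.exp 1) * (lam ^ (n+1) * Real.exp (-1) * X) := key.symm
    _ ≤ (2 * Real.exp 1) * Y := by
        apply mul_le_mul_of_nonneg_left hI (by positivity)
    _ = 2 * Real.exp 1 * Y := by ring

/-- the key quantitative estimate: the time-integral of `aₙ²` over `[t/2, t]` decays
geometrically in `n`. -/
lemma integral_sq_bound (hsol : IsInviscidSol lam a) (hlam : 1 < lam)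
    (hpos : ∀ j : ℕ, ∀ t : ℝ, 0 ≤ t → 0 < a j t)
    {M : ℝ} (hM : ∀ j, a j 0 ≤ M) {t : ℝ} (ht : 0 < t) (n : ℕ) :
    lam ^ (n+1) * (lam ^ (n+1) * (∫ u in (t/2)..t, (a n u)^2)^2)
      ≤ Real.exp 1 * ((t/2) * (lam ^ (n+2) * M * ((n:ℝ)+3)) + 1) * (((n:ℝ)+1) * M^2) := by
  have hlam0 : (0:ℝ) < lam := lt_trans one_pos hlam
  have hM0 : 0 < M := lt_of_lt_of_le (hpos 0 0 le_rfl) (hM 0)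
  set c : ℝ := lam ^ (n+2) * M * ((n:ℝ)+3) with hc
  have hc0 : 0 < c := mul_pos (mul_pos (pow_pos hlam0 _) hM0) (by positivity)
  have ht2 : 0 < t/2 := by linarith
  set K : ℕ := ⌈(t/2) * c⌉₊ with hK
  have hK1 : 1 ≤ K := Nat.one_le_ceil_iff.mpr (by positivity)
  have hKR : (0:ℝ) < (K:ℝ) := by exact_mod_cast hK1
  set d : ℝ := (t/2)/(K:ℝ) with hd
  have hd0 : 0 ≤ d := by positivity
  set p : ℕ → ℝ := fun i => t/2 + i * d with hp
  have hp0 : ∀ i : ℕ, 0 < p i := fun i => by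
    have h1 : (0:ℝ) ≤ (i:ℝ) * d := by positivity
    simp only [hp]
    linarith
  have hpsucc : ∀ i : ℕ, p i ≤ p (i+1) := fun i => by
    simp only [hp]
    push_cast
    nlinarith [hd0]
  have hplen : ∀ i : ℕ, p (i+1) - p i = d := fun i => by
    simp only [hp]
    push_cast
    ring
  have hpK : p K = t := by
    simp only [hp, hd]
    field_simp
    ring
  have hp0' : p 0 = t/2 := by simp [hp]
  have hlen : ∀ i : ℕ, c * (p (i+1) - p i) ≤ 1 := by
    intro i
    rw [hplen i, hd]
    have hle : (t/2) * c ≤ (K:ℝ) := Nat.le_ceil _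
    calc c * ((t/2)/(K:ℝ)) = (t/2) * c / (K:ℝ) := by ring
      _ ≤ 1 := by rw [div_le_one hKR]; exact hle
  -- integrability of the two integrands on each window
  have hsub : ∀ i : ℕ, Set.uIcc (p i) (p (i+1)) ⊆ Set.Ioi (0:ℝ) := fun i =>
    uIcc_subset_Ioi (hp0 i) (hp0 (i+1))
  have hgc : ContinuousOn (fun v => (a n v)^2) (Set.Ioi 0) := (contOn_Ioi hsol n).pow 2
  have hyc : ContinuousOn (fun v => (a n v)^2 * a (n+1) v) (Set.Ioi 0) :=
    hgc.mul (contOn_Ioi hsol (n+1))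
  have hgint : ∀ k : ℕ, k < K → IntervalIntegrable (fun v => (a n v)^2) volume (p k) (p (k+1)) :=
    fun k _ => (hgc.mono (hsub k)).intervalIntegrable
  have hyint : ∀ k : ℕ, k < K →
      IntervalIntegrable (fun v => (a n v)^2 * a (n+1) v) volume (p k) (p (k+1)) :=
    fun k _ => (hyc.mono (hsub k)).intervalIntegrable
  set x : ℕ → ℝ := fun i => ∫ u in (p i)..(p (i+1)), (a n u)^2 with hx
  set y : ℕ → ℝ := fun i => ∫ u in (p i)..(p (i+1)), ((a n u)^2 * a (n+1) u) with hy
  have hsumx : ∑ i ∈ Finset.range K, x i = ∫ u in (t/2)..t, (a n u)^2 := by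
    have := intervalIntegral.sum_integral_adjacent_intervals (a := p) (n := K) hgint
    rw [hp0', hpK] at this
    exact this
  have hsumy : ∑ i ∈ Finset.range K, y i
      = ∫ u in (t/2)..t, ((a n u)^2 * a (n+1) u) := by
    have := intervalIntegral.sum_integral_adjacent_intervals (a := p) (n := K) hyint
    rw [hp0', hpK] at this
    exact this
  -- Cauchy–Schwarz
  have hCS : (∑ i ∈ Finset.range K, x i)^2 ≤ (K:ℝ) * ∑ i ∈ Finset.range K, (x i)^2 := by
    have := Finset.sum_mul_sq_le_sq_mul_sq (Finset.range K) (fun _ => (1:ℝ)) x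
    simpa [Finset.card_range] using this
  -- per-window flux bound
  have hwin : ∀ i ∈ Finset.range K, lam ^ (n+1) * (x i)^2 ≤ 2 * Real.exp 1 * y i := by
    intro i _
    exact window_flux hsol hlam hpos hM n (hp0 i) (hpsucc i) (hc ▸ hlen i)
  -- total flux bound
  have hfb : 2 * lam ^ (n+1) * ∫ u in (t/2)..t, ((a n u)^2 * a (n+1) u)
      ≤ ((n:ℝ) + 1) * M ^ 2 := flux_bound hsol hlam hpos hM ht2 (by linarith) n
  -- combine
  set I : ℝ := ∫ u in (t/2)..t, (a n u)^2 with hI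
  set Y : ℝ := ∫ u in (t/2)..t, ((a n u)^2 * a (n+1) u) with hY
  have hsum1 : lam ^ (n+1) * ∑ i ∈ Finset.range K, (x i)^2
      ≤ 2 * Real.exp 1 * Y := by
    rw [Finset.mul_sum, ← hsumy, Finset.mul_sum]
    exact Finset.sum_le_sum hwin
  have hIsq : lam ^ (n+1) * I^2 ≤ (K:ℝ) * (2 * Real.exp 1 * Y) := by
    calc lam ^ (n+1) * I^2 ≤ lam ^ (n+1) * ((K:ℝ) * ∑ i ∈ Finset.range K, (x i)^2) := by
          apply mul_le_mul_of_nonneg_left _ (pow_pos hlam0 _).le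
          rw [← hsumx]
          exact hCS
      _ = (K:ℝ) * (lam ^ (n+1) * ∑ i ∈ Finset.range K, (x i)^2) := by ring
      _ ≤ (K:ℝ) * (2 * Real.exp 1 * Y) := mul_le_mul_of_nonneg_left hsum1 hKR.le
  have hKle : (K:ℝ) ≤ (t/2) * c + 1 := (Nat.ceil_lt_add_one (by positivity)).le
  have hYnn : 0 ≤ Y := intervalIntegral.integral_nonneg (by linarith)
    (fun u hu => mul_nonneg (sq_nonneg _) (hpos (n+1) u (le_trans ht2.le hu.1)).le)
  have hepos : (0:ℝ) < Real.exp 1 := Real.exp_pos _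
  calc lam ^ (n+1) * (lam ^ (n+1) * I^2)
      ≤ lam ^ (n+1) * ((K:ℝ) * (2 * Real.exp 1 * Y)) :=
        mul_le_mul_of_nonneg_left hIsq (pow_pos hlam0 _).le
    _ = Real.exp 1 * (K:ℝ) * (2 * lam ^ (n+1) * Y) := by ring
    _ ≤ Real.exp 1 * (K:ℝ) * (((n:ℝ) + 1) * M ^ 2) := by
        apply mul_le_mul_of_nonneg_left hfb
        positivity
    _ ≤ Real.exp 1 * ((t/2) * c + 1) * (((n:ℝ) + 1) * M ^ 2) := by
        apply mul_le_mul_of_nonneg_right _ (by positivity)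
        apply mul_le_mul_of_nonneg_left hKle hepos.le

/-- geometric-decay bound for the time integral -/
lemma integral_le_D (hsol : IsInviscidSol lam a) (hlam : 1 < lam)
    (hpos : ∀ j : ℕ, ∀ t : ℝ, 0 ≤ t → 0 < a j t)
    {M : ℝ} (hM : ∀ j, a j 0 ≤ M) {t : ℝ} (ht : 0 < t) (n : ℕ) :
    ∫ u in (t/2)..t, (a n u)^2
      ≤ Real.sqrt (Real.exp 1 * M^2 * ((t/2)*M + 1)) * ((n:ℝ)+3) * (Real.sqrt lam⁻¹)^n := by
  have hlam0 : (0:ℝ) < lam := lt_trans one_pos hlam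
  have hM0 : 0 < M := lt_of_lt_of_le (hpos 0 0 le_rfl) (hM 0)
  have ht2 : 0 < t/2 := by linarith
  have h1 := integral_sq_bound hsol hlam hpos hM ht n
  set Q : ℝ := Real.exp 1 * M^2 * ((t/2)*M + 1) with hQ
  have hQ0 : 0 ≤ Q := by positivity
  set q : ℝ := Real.sqrt lam⁻¹ with hq
  set I : ℝ := ∫ u in (t/2)..t, (a n u)^2 with hI
  set D : ℝ := Real.sqrt Q * ((n:ℝ)+3) * q^n with hD
  have hq2 : q^2 = lam⁻¹ := Real.sq_sqrt (by positivity)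
  have hD2 : D^2 = Q * ((n:ℝ)+3)^2 * (lam⁻¹)^n := by
    have hqq : (q^n)^2 = (q^2)^n := by
      rw [← pow_mul, ← pow_mul, Nat.mul_comm]
    rw [hD, mul_pow, mul_pow, hqq, hq2, Real.sq_sqrt hQ0]
  have hpowid : lam^(n+1) * (lam^(n+1) * (Q * ((n:ℝ)+3)^2 * (lam⁻¹)^n))
      = Q * ((n:ℝ)+3)^2 * lam^(n+2) := by
    have h2 : lam^(n+1) * lam^(n+1) = lam^(n+2) * lam^n := by
      rw [← pow_add, ← pow_add]
      congr 1
      omega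
    have h3 : lam^n * (lam⁻¹)^n = 1 := by
      rw [inv_pow, mul_inv_cancel₀ (pow_ne_zero _ (ne_of_gt hlam0))]
    calc lam^(n+1) * (lam^(n+1) * (Q * ((n:ℝ)+3)^2 * (lam⁻¹)^n))
        = (lam^(n+1) * lam^(n+1)) * (Q * ((n:ℝ)+3)^2) * (lam⁻¹)^n := by ring
      _ = (lam^(n+2) * (Q * ((n:ℝ)+3)^2)) * (lam^n * (lam⁻¹)^n) := by rw [h2]; ring
      _ = Q * ((n:ℝ)+3)^2 * lam^(n+2) := by rw [h3]; ring
  have hP : (1:ℝ) ≤ lam^(n+2) := one_le_pow₀ hlam.le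
  have hn0 : (0:ℝ) ≤ (n:ℝ) := Nat.cast_nonneg n
  have hepos : (0:ℝ) < Real.exp 1 := Real.exp_pos _
  have hkey : Real.exp 1 * ((t/2) * (lam ^ (n+2) * M * ((n:ℝ)+3)) + 1) * (((n:ℝ)+1) * M^2)
      ≤ lam^(n+1) * (lam^(n+1) * D^2) := by
    rw [hD2, hpowid, hQ]
    have h4 : ((n:ℝ)+1) ≤ ((n:ℝ)+3)^2 := by nlinarith
    have h5 : ((n:ℝ)+3)^2 ≤ ((n:ℝ)+3)^2 * lam^(n+2) := by nlinarith [sq_nonneg ((n:ℝ)+3)]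
    have hB : (((n:ℝ)+1)) * M^2 ≤ (((n:ℝ)+3)^2 * lam^(n+2)) * M^2 :=
      mul_le_mul_of_nonneg_right (h4.trans h5) (sq_nonneg M)
    have hA : ((t/2) * M^3 * lam^(n+2)) * (((n:ℝ)+3) * ((n:ℝ)+1))
        ≤ ((t/2) * M^3 * lam^(n+2)) * (((n:ℝ)+3) * ((n:ℝ)+3)) := by
      apply mul_le_mul_of_nonneg_left _ (by positivity)
      nlinarith
    have hXY : ((t/2) * (lam ^ (n+2) * M * ((n:ℝ)+3)) + 1) * (((n:ℝ)+1) * M^2)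
        ≤ M^2 * ((t/2)*M + 1) * ((n:ℝ)+3)^2 * lam^(n+2) := by
      calc ((t/2) * (lam ^ (n+2) * M * ((n:ℝ)+3)) + 1) * (((n:ℝ)+1) * M^2)
          = ((t/2) * M^3 * lam^(n+2)) * (((n:ℝ)+3) * ((n:ℝ)+1))
            + (((n:ℝ)+1)) * M^2 := by ring
        _ ≤ ((t/2) * M^3 * lam^(n+2)) * (((n:ℝ)+3) * ((n:ℝ)+3))
            + (((n:ℝ)+3)^2 * lam^(n+2)) * M^2 := add_le_add hA hB
        _ = M^2 * ((t/2)*M + 1) * ((n:ℝ)+3)^2 * lam^(n+2) := by ring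
    calc Real.exp 1 * ((t/2) * (lam ^ (n+2) * M * ((n:ℝ)+3)) + 1) * (((n:ℝ)+1) * M^2)
        = Real.exp 1 * (((t/2) * (lam ^ (n+2) * M * ((n:ℝ)+3)) + 1) * (((n:ℝ)+1) * M^2)) := by
          ring
      _ ≤ Real.exp 1 * (M^2 * ((t/2)*M + 1) * ((n:ℝ)+3)^2 * lam^(n+2)) :=
          mul_le_mul_of_nonneg_left hXY hepos.le
      _ = Real.exp 1 * M^2 * ((t/2)*M + 1) * ((n:ℝ)+3)^2 * lam^(n+2) := by ring
  have hpp : (0:ℝ) < lam^(n+1) := pow_pos hlam0 _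
  have hsq : I^2 ≤ D^2 := by
    have step1 : lam^(n+1) * I^2 ≤ lam^(n+1) * D^2 :=
      le_of_mul_le_mul_left (h1.trans hkey) hpp
    exact le_of_mul_le_mul_left step1 hpp
  have hInn : 0 ≤ I := intervalIntegral.integral_nonneg (by linarith) (fun u _ => sq_nonneg _)
  have hDnn : 0 ≤ D := by positivity
  calc I = Real.sqrt (I^2) := (Real.sqrt_sq hInn).symm
    _ ≤ Real.sqrt (D^2) := Real.sqrt_le_sqrt hsq
    _ = D := Real.sqrt_sq hDnn

lemma D_summable {lam Q : ℝ} (hlam : 1 < lam) :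
    Summable (fun n : ℕ => Real.sqrt Q * ((n:ℝ)+3) * (Real.sqrt lam⁻¹)^n) := by
  have hlam0 : (0:ℝ) < lam := lt_trans one_pos hlam
  set q : ℝ := Real.sqrt lam⁻¹ with hq
  have hq0 : 0 ≤ q := Real.sqrt_nonneg _
  have hinv : lam⁻¹ < 1 := inv_lt_one_of_one_lt₀ hlam
  have hq1 : q < 1 := by
    nlinarith [Real.sq_sqrt (le_of_lt (inv_pos.mpr hlam0)), hinv]
  have hqn : ‖q‖ < 1 := by
    rw [Real.norm_eq_abs, abs_of_nonneg hq0]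
    exact hq1
  have h1 : Summable (fun n : ℕ => (n:ℝ) * q^n) := by
    have := summable_pow_mul_geometric_of_norm_lt_one 1 hqn
    simpa using this
  have h2 : Summable (fun n : ℕ => q^n) := summable_geometric_of_lt_one hq0 hq1
  have h3 : Summable (fun n : ℕ => ((n:ℝ)+3) * q^n) :=
    (h1.add (h2.mul_left 3)).congr (fun n => by ring)
  exact (h3.mul_left (Real.sqrt Q)).congr (fun n => by ring)

end InviscidAux

/-- Barbato–Flandoli–Morandin: a positive solution of the inviscid dyadic model whose
initial data is componentwise positive and bounded has finite energy for all `t > 0`. -/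
theorem inviscid_positive_finite_energy (lam : ℝ) (hlam : 1 < lam)
    (a : ℕ → ℝ → ℝ) (hsol : IsInviscidSol lam a)
    (hpos : ∀ j : ℕ, ∀ t : ℝ, 0 ≤ t → 0 < a j t)
    (hbdd : ∃ M : ℝ, ∀ j : ℕ, a j 0 ≤ M) :
    ∀ t : ℝ, 0 < t → Summable (fun j : ℕ => (a j t) ^ 2) := by
  obtain ⟨M, hM⟩ := hbdd
  intro t ht
  have ht2 : 0 < t/2 := by linarith
  have htt : t/2 ≤ t := by linarith
  set D : ℕ → ℝ := fun n =>
    Real.sqrt (Real.exp 1 * M^2 * ((t/2)*M + 1)) * ((n:ℝ)+3) * (Real.sqrt lam⁻¹)^n with hD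
  have hDsum : Summable D := InviscidAux.D_summable hlam
  have hDnn : ∀ n, 0 ≤ D n := fun n => by
    have h1 : (0:ℝ) ≤ Real.sqrt (Real.exp 1 * M^2 * ((t/2)*M + 1)) := Real.sqrt_nonneg _
    have h2 : (0:ℝ) ≤ (Real.sqrt lam⁻¹)^n := pow_nonneg (Real.sqrt_nonneg _) n
    have h3 : (0:ℝ) ≤ (n:ℝ)+3 := by positivity
    simp only [hD]
    positivity
  set S : ℝ := ∑' n, D n with hS
  have hSnn : 0 ≤ S := tsum_nonneg hDnn
  apply summable_of_sum_range_le (c := S / (t/2)) (fun n => sq_nonneg _)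
  intro N
  rcases N with _ | m
  · simpa using div_nonneg hSnn ht2.le
  · have hsub : Set.uIcc (t/2) t ⊆ Set.Ici (0:ℝ) := fun x hx =>
      Set.mem_Ici.mpr (InviscidAux.uIcc_subset_Ioi ht2 ht hx).le
    have hpartial : ∀ j : ℕ, IntervalIntegrable (fun s => a j s ^ 2) volume (t/2) t := fun j =>
      (((InviscidAux.contOn_Ioi hsol j).pow 2).mono
        (InviscidAux.uIcc_subset_Ioi ht2 ht)).intervalIntegrable
    have hEint : IntervalIntegrable (fun s => ∑ j ∈ Finset.range (m+1), a j s ^ 2)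
        volume (t/2) t := ((InviscidAux.energy_cont hsol m).mono hsub).intervalIntegrable
    have hmono2 : ∀ s ∈ Set.Icc (t/2) t,
        (∑ j ∈ Finset.range (m+1), a j t ^ 2) ≤ ∑ j ∈ Finset.range (m+1), a j s ^ 2 := by
      intro s hs
      exact InviscidAux.energy_anti hsol hlam hpos m
        (Set.mem_Ici.mpr (by linarith [hs.1])) (Set.mem_Ici.mpr (by linarith)) hs.2
    have step1 : (t - t/2) * (∑ j ∈ Finset.range (m+1), a j t ^ 2)
        ≤ ∫ s in (t/2)..t, ∑ j ∈ Finset.range (m+1), a j s ^ 2 := by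
      have hconst : ∫ _s in (t/2)..t, (∑ j ∈ Finset.range (m+1), a j t ^ 2)
          = (t - t/2) * ∑ j ∈ Finset.range (m+1), a j t ^ 2 := by
        rw [intervalIntegral.integral_const, smul_eq_mul]
      rw [← hconst]
      exact intervalIntegral.integral_mono_on htt intervalIntegrable_const hEint hmono2
    have step2 : ∫ s in (t/2)..t, ∑ j ∈ Finset.range (m+1), a j s ^ 2
        = ∑ j ∈ Finset.range (m+1), ∫ s in (t/2)..t, a j s ^ 2 :=
      intervalIntegral.integral_finset_sum (fun j _ => hpartial j)
    have step3 : ∑ j ∈ Finset.range (m+1), ∫ s in (t/2)..t, a j s ^ 2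
        ≤ ∑ j ∈ Finset.range (m+1), D j :=
      Finset.sum_le_sum (fun j _ => InviscidAux.integral_le_D hsol hlam hpos hM ht j)
    have step4 : ∑ j ∈ Finset.range (m+1), D j ≤ S :=
      Summable.sum_le_tsum _ (fun i _ => hDnn i) hDsum
    have h5 : (t - t/2) * (∑ j ∈ Finset.range (m+1), a j t ^ 2) ≤ S := by
      calc (t - t/2) * (∑ j ∈ Finset.range (m+1), a j t ^ 2)
          ≤ ∫ s in (t/2)..t, ∑ j ∈ Finset.range (m+1), a j s ^ 2 := step1
        _ = ∑ j ∈ Finset.range (m+1), ∫ s in (t/2)..t, a j s ^ 2 := step2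
        _ ≤ ∑ j ∈ Finset.range (m+1), D j := step3
        _ ≤ S := step4
    rw [le_div_iff₀ ht2]
    have hhalf : t - t/2 = t/2 := by ring
    rw [hhalf] at h5
    linarith [h5]
end

section
/- Let {a_j} be a positive solution of the inviscid dyadic model on [0,∞) (i.e. a_j(t) > 0 for all j ≥ 0 and t ≥ 0) with finite energy: Σ_{j≥0} a_j(t)² < ∞ for all t ≥ 0. Then the energy vanishes asymptotically (anomalous dissipation): lim_{t→∞} Σ_{j≥0} a_j(t)² = 0. -/
open MeasureTheory Filter
open scoped ENNReal

section Aux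

variable {lam : ℝ} {a : ℕ → ℝ → ℝ}

private lemma monoOn_of_deriv {s : Set ℝ} (hs : Convex ℝ s) {g g' : ℝ → ℝ}
    (hd : ∀ t ∈ s, HasDerivWithinAt g (g' t) s t)
    (h0 : ∀ t ∈ s, 0 ≤ g' t) : MonotoneOn g s :=
  monotoneOn_of_hasDerivWithinAt_nonneg hs
    (fun t ht => (hd t ht).continuousWithinAt)
    (fun t ht => (hd t (interior_subset ht)).mono interior_subset)
    (fun t ht => h0 t (interior_subset ht))

private lemma antiOn_of_deriv {s : Set ℝ} (hs : Convex ℝ s) {g g' : ℝ → ℝ}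
    (hd : ∀ t ∈ s, HasDerivWithinAt g (g' t) s t)
    (h0 : ∀ t ∈ s, g' t ≤ 0) : AntitoneOn g s :=
  antitoneOn_of_hasDerivWithinAt_nonpos hs
    (fun t ht => (hd t ht).continuousWithinAt)
    (fun t ht => (hd t (interior_subset ht)).mono interior_subset)
    (fun t ht => h0 t (interior_subset ht))

private lemma energy_hasDeriv (hsol : IsInviscidSol lam a)
    (n : ℕ) {t : ℝ} (ht : t ∈ Set.Ici (0:ℝ)) :
    HasDerivWithinAt (fun u => ∑ j ∈ Finset.range (n+1), a j u ^ 2)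
      (-(2 * lam ^ (n+1) * a n t ^ 2 * a (n+1) t)) (Set.Ici 0) t := by
  have hterm : ∀ j : ℕ, HasDerivWithinAt (fun u => a j u ^ 2)
      (((2:ℕ):ℝ) * a j t ^ 1 * (lam ^ j * (if j = 0 then (0:ℝ) else a (j - 1) t) ^ 2
        - lam ^ (j + 1) * a j t * a (j + 1) t)) (Set.Ici 0) t :=
    fun j => (hsol j t ht).pow 2
  have hsum := HasDerivWithinAt.fun_sum (fun j (_ : j ∈ Finset.range (n+1)) => hterm j)
  refine hsum.congr_deriv (Eq.symm ?_)
  have hstep : ∀ j : ℕ,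
      ((2:ℕ):ℝ) * a j t ^ 1 * (lam ^ j * (if j = 0 then (0:ℝ) else a (j - 1) t) ^ 2
        - lam ^ (j + 1) * a j t * a (j + 1) t)
      = (fun j => 2 * lam ^ j * (if j = 0 then (0:ℝ) else a (j - 1) t) ^ 2 * a j t) j
        - (fun j => 2 * lam ^ j * (if j = 0 then (0:ℝ) else a (j - 1) t) ^ 2 * a j t) (j+1) := by
    intro j
    cases j with
    | zero => simp; ring
    | succ m => simp only [Nat.succ_ne_zero, if_false, Nat.add_sub_cancel]; push_cast; ring
  rw [Finset.sum_congr rfl (fun j _ => hstep j), Finset.sum_range_sub']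
  simp

private lemma energy_antitoneOn (hsol : IsInviscidSol lam a) (hlam : 1 < lam)
    (hpos : ∀ j : ℕ, ∀ t : ℝ, 0 ≤ t → 0 < a j t) (n : ℕ) :
    AntitoneOn (fun t => ∑ j ∈ Finset.range (n+1), a j t ^ 2) (Set.Ici 0) := by
  refine antiOn_of_deriv (convex_Ici 0)
    (g' := fun t => -(2 * lam ^ (n+1) * a n t ^ 2 * a (n+1) t))
    (fun t ht => energy_hasDeriv hsol n ht) (fun t ht => ?_)
  have h1 : (0:ℝ) < lam ^ (n+1) := pow_pos (lt_trans one_pos hlam) _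
  have h2 := hpos (n+1) t ht
  have h3 : (0:ℝ) ≤ a n t ^ 2 := sq_nonneg _
  show -(2 * lam ^ (n+1) * a n t ^ 2 * a (n+1) t) ≤ 0
  have h4 : (0:ℝ) ≤ 2 * lam ^ (n+1) * a n t ^ 2 * a (n+1) t := by positivity
  linarith

private lemma sq_le_E0 (hsol : IsInviscidSol lam a) (hlam : 1 < lam)
    (hpos : ∀ j : ℕ, ∀ t : ℝ, 0 ≤ t → 0 < a j t)
    (hfin : ∀ t : ℝ, 0 ≤ t → Summable (fun j : ℕ => (a j t) ^ 2))
    (j : ℕ) {t : ℝ} (ht : 0 ≤ t) : a j t ^ 2 ≤ ∑' i : ℕ, a i 0 ^ 2 := by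
  have h1 : a j t ^ 2 ≤ ∑ i ∈ Finset.range (j+1), a i t ^ 2 :=
    Finset.single_le_sum (f := fun i => a i t ^ 2) (fun i _ => sq_nonneg _)
      (Finset.self_mem_range_succ j)
  have h2 := energy_antitoneOn hsol hlam hpos j Set.self_mem_Ici (Set.mem_Ici.2 ht) ht
  have h3 : ∑ i ∈ Finset.range (j+1), a i 0 ^ 2 ≤ ∑' i : ℕ, a i 0 ^ 2 :=
    Summable.sum_le_tsum _ (fun i _ => sq_nonneg _) (hfin 0 le_rfl)
  simp only [] at h2
  linarith


private lemma grow1 (hsol : IsInviscidSol lam a) (hlam : 1 < lam)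
    (hpos : ∀ j : ℕ, ∀ t : ℝ, 0 ≤ t → 0 < a j t) {M : ℝ}
    (hM : ∀ j : ℕ, ∀ u : ℝ, 0 ≤ u → a j u ≤ M)
    (k : ℕ) {t0 s : ℝ} (h0 : 0 ≤ t0) (hs : t0 ≤ s) :
    a k t0 * Real.exp (-(lam ^ (k+1) * M) * (s - t0)) ≤ a k s := by
  have hlam0 : (0:ℝ) < lam := lt_trans one_pos hlam
  set c : ℝ := lam ^ (k+1) * M with hc
  have hmono : MonotoneOn (fun u => a k u * Real.exp (c * u)) (Set.Ici 0) := by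
    refine monoOn_of_deriv (convex_Ici 0) (g' := fun u =>
      (lam ^ k * (if k = 0 then (0:ℝ) else a (k - 1) u) ^ 2
        - lam ^ (k + 1) * a k u * a (k + 1) u) * Real.exp (c * u)
      + a k u * (Real.exp (c * u) * c)) (fun u hu => ?_) (fun u hu => ?_)
    · have hcu : HasDerivAt (fun u : ℝ => c * u) c u := by
        simpa using (hasDerivAt_id u).const_mul c
      exact (hsol k u hu).mul hcu.exp.hasDerivWithinAt
    · have h1 := hpos k u hu
      have h2 := hpos (k+1) u hu
      have h3 := hM (k+1) u hu
      have h4 : (0:ℝ) < Real.exp (c * u) := Real.exp_pos _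
      have h5 : (0:ℝ) ≤ lam ^ k * (if k = 0 then (0:ℝ) else a (k - 1) u) ^ 2 :=
        mul_nonneg (pow_nonneg hlam0.le _) (sq_nonneg _)
      have h6 : (0:ℝ) < lam ^ (k+1) := pow_pos hlam0 _
      have key : 0 ≤ lam ^ k * (if k = 0 then (0:ℝ) else a (k - 1) u) ^ 2
          - lam ^ (k + 1) * a k u * a (k + 1) u + a k u * c := by
        rw [hc]
        nlinarith [mul_nonneg (mul_nonneg h6.le h1.le) (sub_nonneg.2 h3)]
      show 0 ≤ (lam ^ k * (if k = 0 then (0:ℝ) else a (k - 1) u) ^ 2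
        - lam ^ (k + 1) * a k u * a (k + 1) u) * Real.exp (c * u)
        + a k u * (Real.exp (c * u) * c)
      have hrw : (lam ^ k * (if k = 0 then (0:ℝ) else a (k - 1) u) ^ 2
          - lam ^ (k + 1) * a k u * a (k + 1) u) * Real.exp (c * u)
          + a k u * (Real.exp (c * u) * c)
          = Real.exp (c * u) * (lam ^ k * (if k = 0 then (0:ℝ) else a (k - 1) u) ^ 2
          - lam ^ (k + 1) * a k u * a (k + 1) u + a k u * c) := by ring
      rw [hrw]
      exact mul_nonneg h4.le key
  have hmain := hmono (Set.mem_Ici.2 h0) (Set.mem_Ici.2 (le_trans h0 hs)) hs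
  simp only [] at hmain
  have hepos : (0:ℝ) < Real.exp (c * s) := Real.exp_pos _
  have hexp : Real.exp (-(c) * (s - t0)) * Real.exp (c * s) = Real.exp (c * t0) := by
    rw [← Real.exp_add]; congr 1; ring
  rw [← mul_le_mul_iff_of_pos_right hepos, mul_assoc, hexp]
  exact hmain

private lemma pump (hsol : IsInviscidSol lam a) (hlam : 1 < lam)
    (hpos : ∀ j : ℕ, ∀ t : ℝ, 0 ≤ t → 0 < a j t) {M : ℝ}
    (hM : ∀ j : ℕ, ∀ u : ℝ, 0 ≤ u → a j u ≤ M) (hMpos : 0 < M)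
    (k : ℕ) {t0 s : ℝ} (h0 : 0 ≤ t0)
    (hs1 : t0 + 1/(lam^(k+2)*M) ≤ s) (hs2 : s ≤ t0 + 2*(1/(lam^(k+2)*M))) :
    Real.exp (-4) * a k t0 ^ 2 ≤ a k s ^ 2 ∧
    (1 - Real.exp (-1)) * (Real.exp (-4) * a k t0 ^ 2) / (lam * M) ≤ a (k+1) s := by
  have hlam0 : (0:ℝ) < lam := lt_trans one_pos hlam
  have hlk2 : (0:ℝ) < lam^(k+2) := pow_pos hlam0 _
  set τ : ℝ := 1/(lam^(k+2)*M) with hτdef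
  set c2 : ℝ := lam^(k+2)*M with hc2
  have hτ : 0 < τ := by rw [hτdef]; positivity
  have hc2pos : 0 < c2 := by rw [hc2]; positivity
  have hc2τ : c2 * τ = 1 := by rw [hc2, hτdef]; field_simp; rw [hc2]
  have hIcc : Set.Icc t0 (t0+2*τ) ⊆ Set.Ici (0:ℝ) := fun u hu => le_trans h0 hu.1
  have claimA : ∀ u ∈ Set.Icc t0 (t0+2*τ), Real.exp (-4) * a k t0 ^ 2 ≤ a k u ^ 2 := by
    intro u hu
    have hg := grow1 hsol hlam hpos hM k h0 hu.1
    have hb : (-2 : ℝ) ≤ -(lam^(k+1)*M) * (u - t0) := by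
      have h1 : lam^(k+1)*M*(u - t0) ≤ lam^(k+1)*M*(2*τ) := by
        apply mul_le_mul_of_nonneg_left _ (by positivity)
        linarith [hu.2]
      have h2 : lam^(k+1)*M*(2*τ) = 2/lam := by
        rw [hτdef]; field_simp; ring
      have h3 : 2/lam ≤ 2 := by
        rw [div_le_iff₀ hlam0]; nlinarith
      nlinarith
    have he : Real.exp (-2) ≤ Real.exp (-(lam^(k+1)*M) * (u - t0)) := Real.exp_le_exp.2 hb
    have h4 : a k t0 * Real.exp (-2) ≤ a k u :=
      le_trans (mul_le_mul_of_nonneg_left he (hpos k t0 h0).le) hg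
    have h5 : Real.exp (-2) * Real.exp (-2) = Real.exp (-4) := by
      rw [← Real.exp_add]; norm_num
    have h6 : (a k t0 * Real.exp (-2)) * (a k t0 * Real.exp (-2)) ≤ a k u * a k u :=
      mul_le_mul h4 h4 (mul_nonneg (hpos k t0 h0).le (Real.exp_pos _).le) (hpos k u (hIcc hu)).le
    nlinarith [h6, h5]
  set B : ℝ := Real.exp (-4) * a k t0 ^ 2 / (lam * M) with hB
  have hBnn : 0 ≤ B := by rw [hB]; positivity
  have hmono : MonotoneOn (fun u => (a (k+1) u - B) * Real.exp (c2 * u))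
      (Set.Icc t0 (t0+2*τ)) := by
    refine monoOn_of_deriv (convex_Icc _ _) (g' := fun u =>
      (lam ^ (k+1) * a k u ^ 2 - lam ^ (k+2) * a (k+1) u * a (k+2) u) * Real.exp (c2 * u)
      + (a (k+1) u - B) * (Real.exp (c2 * u) * c2)) (fun u hu => ?_) (fun u hu => ?_)
    · have hcu : HasDerivAt (fun u : ℝ => c2 * u) c2 u := by
        simpa using (hasDerivAt_id u).const_mul c2
      have hd := hsol (k+1) u (hIcc hu)
      have hif : (if k+1 = 0 then (0:ℝ) else a (k+1-1) u) = a k u := by simp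
      rw [hif] at hd
      exact ((hd.sub_const B).mono hIcc).mul hcu.exp.hasDerivWithinAt
    · have h1 := hpos (k+1) u (hIcc hu)
      have h2 := hpos (k+2) u (hIcc hu)
      have h3 := hM (k+2) u (hIcc hu)
      have h4 : (0:ℝ) < Real.exp (c2 * u) := Real.exp_pos _
      have h5 := claimA u hu
      have h6 : (0:ℝ) < lam ^ (k+1) := pow_pos hlam0 _
      have hfact1 : 0 ≤ lam^(k+2) * a (k+1) u * (M - a (k+2) u) :=
        mul_nonneg (mul_nonneg hlk2.le h1.le) (sub_nonneg.2 h3)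
      have hfact2 : 0 ≤ lam^(k+1) * (a k u ^ 2 - Real.exp (-4) * a k t0 ^ 2) :=
        mul_nonneg h6.le (sub_nonneg.2 h5)
      have hc2B : B * c2 = lam^(k+1) * (Real.exp (-4) * a k t0 ^ 2) := by
        rw [hB, hc2]; field_simp; ring
      have key : 0 ≤ (lam ^ (k+1) * a k u ^ 2 - lam ^ (k+2) * a (k+1) u * a (k+2) u)
          + (a (k+1) u - B) * c2 := by nlinarith [hc2B]
      show 0 ≤ (lam ^ (k+1) * a k u ^ 2 - lam ^ (k+2) * a (k+1) u * a (k+2) u) * Real.exp (c2 * u)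
          + (a (k+1) u - B) * (Real.exp (c2 * u) * c2)
      nlinarith [mul_nonneg h4.le key]
  have ht0mem : t0 ∈ Set.Icc t0 (t0+2*τ) := ⟨le_rfl, by linarith⟩
  have hsmem : s ∈ Set.Icc t0 (t0+2*τ) := ⟨by linarith, by linarith⟩
  have hmain := hmono ht0mem hsmem (by linarith)
  simp only [] at hmain
  have h1 := hpos (k+1) t0 h0
  have hE0 : (0:ℝ) < Real.exp (c2 * t0) := Real.exp_pos _
  have hEs : (0:ℝ) < Real.exp (c2 * s) := Real.exp_pos _
  have hll : -B * Real.exp (c2 * t0) ≤ (a (k+1) s - B) * Real.exp (c2 * s) := by nlinarith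
  have hexple : Real.exp (c2 * t0) ≤ Real.exp (-1) * Real.exp (c2 * s) := by
    rw [← Real.exp_add]
    apply Real.exp_le_exp.2
    have h8 : τ ≤ s - t0 := by linarith
    have h9 : c2 * τ ≤ c2 * (s - t0) := mul_le_mul_of_nonneg_left h8 hc2pos.le
    have h10 : (1:ℝ) ≤ c2 * (s - t0) := by rw [← hc2τ]; exact h9
    nlinarith [h10]
  have h9 : -B * Real.exp (-1) * Real.exp (c2*s) ≤ (a (k+1) s - B) * Real.exp (c2*s) := by
    nlinarith [hll, hexple, hBnn]
  have h10 : -B * Real.exp (-1) ≤ a (k+1) s - B := le_of_mul_le_mul_right h9 hEs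
  refine ⟨claimA s hsmem, ?_⟩
  have hEq : (1 - Real.exp (-1)) * (Real.exp (-4) * a k t0 ^ 2) / (lam * M)
      = B - B * Real.exp (-1) := by rw [hB]; ring
  rw [hEq]; linarith

private lemma contA (hsol : IsInviscidSol lam a) (j : ℕ) :
    Continuous fun s : ℝ => a j (max s 0) := by
  have hcont : ContinuousOn (a j) (Set.Ici 0) := fun t ht => (hsol j t ht).continuousWithinAt
  exact hcont.comp_continuous (continuous_id.max continuous_const)
    (fun x => Set.mem_Ici.2 (le_max_right x 0))

private lemma flux (hsol : IsInviscidSol lam a) (hlam : 1 < lam)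
    (hpos : ∀ j : ℕ, ∀ t : ℝ, 0 ≤ t → 0 < a j t)
    (hfin : ∀ t : ℝ, 0 ≤ t → Summable (fun j : ℕ => (a j t) ^ 2))
    (n : ℕ) {T : ℝ} (hT : 0 ≤ T) :
    2 * lam ^ (n+1) * ∫ s in (0:ℝ)..T, (a n (max s 0)) ^ 2 * a (n+1) (max s 0)
      ≤ ∑' i : ℕ, a i 0 ^ 2 := by
  have hfc : Continuous fun s => (a n (max s 0)) ^ 2 * a (n+1) (max s 0) :=
    ((contA hsol n).pow 2).mul (contA hsol (n+1))
  have hanti : AntitoneOn (fun t => (∑ j ∈ Finset.range (n+1), a j t ^ 2)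
      + 2 * lam ^ (n+1) * ∫ s in (0:ℝ)..t, (a n (max s 0)) ^ 2 * a (n+1) (max s 0))
      (Set.Ici 0) := by
    refine antiOn_of_deriv (convex_Ici 0) (g' := fun t =>
      -(2 * lam ^ (n+1) * a n t ^ 2 * a (n+1) t)
        + 2 * lam ^ (n+1) * ((a n (max t 0)) ^ 2 * a (n+1) (max t 0)))
      (fun t ht => ?_) (fun t ht => ?_)
    · exact (energy_hasDeriv hsol n ht).add
        (((hfc.integral_hasStrictDerivAt 0 t).hasDerivAt.hasDerivWithinAt).const_mul _)
    · have hmax : max t 0 = t := max_eq_left (Set.mem_Ici.1 ht)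
      show -(2 * lam ^ (n+1) * a n t ^ 2 * a (n+1) t)
        + 2 * lam ^ (n+1) * ((a n (max t 0)) ^ 2 * a (n+1) (max t 0)) ≤ 0
      rw [hmax]
      have : -(2 * lam ^ (n+1) * a n t ^ 2 * a (n+1) t)
        + 2 * lam ^ (n+1) * ((a n t) ^ 2 * a (n+1) t) = 0 := by ring
      linarith
  have h1 := hanti Set.self_mem_Ici (Set.mem_Ici.2 hT) hT
  simp only [intervalIntegral.integral_same, mul_zero, add_zero] at h1
  have h2 : (0:ℝ) ≤ ∑ j ∈ Finset.range (n+1), a j T ^ 2 :=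
    Finset.sum_nonneg fun _ _ => sq_nonneg _
  have h3 : ∑ j ∈ Finset.range (n+1), a j 0 ^ 2 ≤ ∑' i : ℕ, a i 0 ^ 2 :=
    Summable.sum_le_tsum _ (fun i _ => sq_nonneg _) (hfin 0 le_rfl)
  linarith

end Aux

set_option maxHeartbeats 1600000 in
/-- Barbato–Flandoli–Morandin: the energy of a positive finite-energy solution of the
inviscid dyadic model vanishes asymptotically (anomalous dissipation). -/
theorem inviscid_positive_anomalous_dissipation (lam : ℝ) (hlam : 1 < lam)
    (a : ℕ → ℝ → ℝ) (hsol : IsInviscidSol lam a)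
    (hpos : ∀ j : ℕ, ∀ t : ℝ, 0 ≤ t → 0 < a j t)
    (hfin : ∀ t : ℝ, 0 ≤ t → Summable (fun j : ℕ => (a j t) ^ 2)) :
    Tendsto (fun t : ℝ => ∑' j : ℕ, (a j t) ^ 2) atTop (nhds 0) := by
  classical
  have hlam0 : (0:ℝ) < lam := lt_trans one_pos hlam
  set E : ℝ → ℝ := fun t => ∑' j : ℕ, (a j t) ^ 2 with hEdef
  set E0 : ℝ := ∑' i : ℕ, a i 0 ^ 2 with hE0def
  have hE0pos : 0 < E0 := by
    have h1 : a 0 0 ^ 2 ≤ E0 :=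
      Summable.le_tsum (hfin 0 le_rfl) 0 (fun j _ => sq_nonneg _)
    nlinarith [hpos 0 0 le_rfl]
  set M : ℝ := Real.sqrt E0 with hMdef
  have hMpos : 0 < M := Real.sqrt_pos.2 hE0pos
  have hMsq : M ^ 2 = E0 := Real.sq_sqrt hE0pos.le
  have hM : ∀ j : ℕ, ∀ u : ℝ, 0 ≤ u → a j u ≤ M := by
    intro j u hu
    have h1 := sq_le_E0 hsol hlam hpos hfin j hu
    nlinarith [hpos j u hu, hMpos]
  have hEanti : ∀ {s t : ℝ}, 0 ≤ s → s ≤ t → E t ≤ E s := by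
    intro s t hs hst
    refine Summable.tsum_le_of_sum_le (hfin t (hs.trans hst)) (fun F => ?_)
    have hsub : F ⊆ Finset.range (F.sup id + 1) := fun j hj =>
      Finset.mem_range.2 (Nat.lt_succ_of_le (Finset.le_sup (f := id) hj))
    calc ∑ j ∈ F, a j t ^ 2
        ≤ ∑ j ∈ Finset.range (F.sup id + 1), a j t ^ 2 :=
          Finset.sum_le_sum_of_subset_of_nonneg hsub (fun _ _ _ => sq_nonneg _)
      _ ≤ ∑ j ∈ Finset.range (F.sup id + 1), a j s ^ 2 :=
          energy_antitoneOn hsol hlam hpos (F.sup id)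
            (Set.mem_Ici.2 hs) (Set.mem_Ici.2 (hs.trans hst)) hst
      _ ≤ E s := Summable.sum_le_tsum _ (fun i _ => sq_nonneg _) (hfin s hs)
  have hEnonneg : ∀ t : ℝ, 0 ≤ E t := fun t => tsum_nonneg (fun j => sq_nonneg _)
  -- main claim: energy dips below any positive level
  have key : ∀ L : ℝ, 0 < L → ∃ t : ℝ, 0 ≤ t ∧ E t < L := by
    intro L hL
    by_contra hcon
    push_neg at hcon
    -- hcon : ∀ t, 0 ≤ t → L ≤ E t
    set q : ℝ := (1 + 1/lam)/2 with hqdef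
    have hinv1 : 1/lam < 1 := by rw [div_lt_one hlam0]; exact hlam
    have hinv0 : 0 < 1/lam := by positivity
    have hq0 : 0 < q := by rw [hqdef]; linarith
    have hq1 : q < 1 := by rw [hqdef]; linarith
    have hlaminv : lam * (1/lam) = 1 := by field_simp
    have hql : 1 < q^2 * lam := by
      rw [hqdef]
      nlinarith [sq_nonneg (1 - 1/lam), hlam0, hlaminv, hinv1, hinv0]
    have hq2pos : 0 < q^2 * lam := lt_trans one_pos hql
    set u : ℝ := 1/(q^2*lam) with hudef
    have hu0 : 0 < u := by rw [hudef]; positivity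
    have hu1 : u < 1 := by rw [hudef, div_lt_one hq2pos]; exact hql
    -- integrand and partial primitives
    set g : ℕ → ℝ → ℝ := fun k s => (a k (max s 0)) ^ 2 * a (k+1) (max s 0) with hgdef
    have hgc : ∀ k, Continuous (g k) := fun k =>
      ((contA hsol k).pow 2).mul (contA hsol (k+1))
    have hgnn : ∀ k s, 0 ≤ g k s := fun k s =>
      mul_nonneg (sq_nonneg _) (hpos (k+1) (max s 0) (le_max_right _ _)).le
    set Fn : ℕ → ℝ → ℝ := fun k t => (1/q^2)^k * ∫ s in (0:ℝ)..t, g k s with hFndef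
    have hq2k : ∀ k : ℕ, (0:ℝ) < (1/q^2)^k := fun k => pow_pos (by positivity) _
    have hFnnn : ∀ k : ℕ, ∀ t : ℝ, 0 ≤ t → 0 ≤ Fn k t := by
      intro k t ht
      exact mul_nonneg (hq2k k).le
        (intervalIntegral.integral_nonneg ht (fun x _ => hgnn k x))
    have hFnle : ∀ k : ℕ, ∀ t : ℝ, 0 ≤ t → Fn k t ≤ (E0/(2*lam)) * u^k := by
      intro k t ht
      have h1 := flux hsol hlam hpos hfin k ht
      have h2 : (0:ℝ) < 2 * lam^(k+1) := by positivity
      have hI : ∫ s in (0:ℝ)..t, g k s ≤ E0 / (2 * lam^(k+1)) := by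
        rw [le_div_iff₀ h2]
        calc (∫ s in (0:ℝ)..t, g k s) * (2 * lam^(k+1))
            = 2 * lam ^ (k+1) * ∫ s in (0:ℝ)..t, g k s := by ring
          _ ≤ E0 := h1
      calc Fn k t ≤ (1/q^2)^k * (E0/(2*lam^(k+1))) :=
            mul_le_mul_of_nonneg_left hI (hq2k k).le
        _ = (E0/(2*lam)) * u^k := by
            have hqne : q ≠ 0 := ne_of_gt hq0
            have hlamne : lam ≠ 0 := ne_of_gt hlam0
            have e1 : u^k = (1/q^2)^k * (1/lam)^k := by
              rw [hudef, ← mul_pow]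
              congr 1
              field_simp
            rw [e1, one_div_pow, pow_succ]
            ring
    have hgeom : Summable (fun k : ℕ => (E0/(2*lam)) * u^k) :=
      (summable_geometric_of_lt_one hu0.le hu1).mul_left _
    have hSum : ∀ t : ℝ, 0 ≤ t → Summable (fun k => Fn k t) := fun t ht =>
      Summable.of_nonneg_of_le (fun k => hFnnn k t ht) (fun k => hFnle k t ht) hgeom
    set F : ℝ → ℝ := fun t => ∑' k : ℕ, Fn k t with hFdef
    set C : ℝ := (E0/(2*lam)) * (1-u)⁻¹ with hCdef
    have hFle : ∀ t : ℝ, 0 ≤ t → F t ≤ C := by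
      intro t ht
      calc F t ≤ ∑' k : ℕ, (E0/(2*lam)) * u^k :=
            Summable.tsum_le_tsum (fun k => hFnle k t ht) (hSum t ht) hgeom
        _ = (E0/(2*lam)) * ∑' k : ℕ, u^k := tsum_mul_left
        _ = C := by rw [tsum_geometric_of_lt_one hu0.le hu1]
    have hFnmono : ∀ k : ℕ, ∀ {t t' : ℝ}, 0 ≤ t → t ≤ t' → Fn k t ≤ Fn k t' := by
      intro k t t' ht htt'
      have hint : ∫ s in (0:ℝ)..t', g k s
          = (∫ s in (0:ℝ)..t, g k s) + ∫ s in t..t', g k s :=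
        (intervalIntegral.integral_add_adjacent_intervals
          ((hgc k).intervalIntegrable _ _) ((hgc k).intervalIntegrable _ _)).symm
      have hnn : 0 ≤ ∫ s in t..t', g k s :=
        intervalIntegral.integral_nonneg htt' (fun x _ => hgnn k x)
      have : (∫ s in (0:ℝ)..t, g k s) ≤ ∫ s in (0:ℝ)..t', g k s := by
        rw [hint]; linarith
      exact mul_le_mul_of_nonneg_left this (hq2k k).le
    have hFmono : ∀ {t t' : ℝ}, 0 ≤ t → t ≤ t' → F t ≤ F t' := fun {t t'} ht htt' =>
      Summable.tsum_le_tsum (fun k => hFnmono k ht htt') (hSum t ht) (hSum t' (ht.trans htt'))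
    have hFnonneg : ∀ t : ℝ, 0 ≤ t → 0 ≤ F t := fun t ht =>
      tsum_nonneg (fun k => hFnnn k t ht)
    -- concentration index
    have hconc : ∀ t : ℝ, 0 ≤ t → ∃ k : ℕ, (1-q)*(L/2)*q^k ≤ a k t ^ 2 := by
      intro t ht
      by_contra hno
      push_neg at hno
      have h1 : E t ≤ ∑' k : ℕ, (1-q)*(L/2)*q^k := by
        refine Summable.tsum_le_tsum (fun k => (hno k).le) (hfin t ht) ?_
        exact (summable_geometric_of_lt_one hq0.le hq1).mul_left _
      rw [tsum_mul_left, tsum_geometric_of_lt_one hq0.le hq1] at h1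
      have hne : (1-q) ≠ 0 := ne_of_gt (by linarith)
      have h2 : (1-q) * (L/2) * (1-q)⁻¹ = L/2 := by
        calc (1-q) * (L/2) * (1-q)⁻¹ = (L/2) * ((1-q) * (1-q)⁻¹) := by ring
          _ = L/2 := by rw [mul_inv_cancel₀ hne, mul_one]
      rw [h2] at h1
      have := hcon t ht
      linarith
    -- the uniform progress rate
    set ρ : ℝ := (1 - Real.exp (-1)) * (Real.exp (-4))^2 * ((1-q)*(L/2))^2 / (lam * M)
      with hρdef
    have hexp1 : Real.exp (-1) < 1 := by
      rw [Real.exp_lt_one_iff]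
      norm_num
    have hρpos : 0 < ρ := by
      rw [hρdef]
      have h1 : (0:ℝ) < 1 - Real.exp (-1) := by linarith
      have h2 : (0:ℝ) < 1 - q := by linarith
      positivity
    -- progress step
    have hstep : ∀ t : ℝ, 0 ≤ t → ∃ τ : ℝ, 0 < τ ∧ F t + ρ * τ ≤ F (t + 2*τ) := by
      intro t ht
      obtain ⟨k, hk⟩ := hconc t ht
      set τ : ℝ := 1/(lam^(k+2)*M) with hτdef
      have hτ : 0 < τ := by rw [hτdef]; positivity
      refine ⟨τ, hτ, ?_⟩
      have hδnn : (0:ℝ) ≤ (1-q)*(L/2)*q^k := by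
        have : (0:ℝ) < 1 - q := by linarith
        positivity
      -- pointwise lower bound on the bump interval
      have hpt : ∀ s ∈ Set.Icc (t+τ) (t+2*τ),
          (Real.exp (-4) * a k t ^ 2) *
            ((1 - Real.exp (-1)) * (Real.exp (-4) * a k t ^ 2) / (lam * M)) ≤ g k s := by
        intro s hs
        have hs0 : (0:ℝ) ≤ s := by
          have := hs.1
          nlinarith [hτ]
        have hpump := pump (M := M) hsol hlam hpos hM hMpos k (t0 := t) (s := s) ht
          (by rw [← hτdef]; exact hs.1) (by rw [← hτdef]; exact hs.2)
        have hgs : g k s = a k s ^ 2 * a (k+1) s := by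
          rw [hgdef]
          simp only [max_eq_left hs0]
        rw [hgs]
        refine mul_le_mul hpump.1 hpump.2 ?_ (sq_nonneg _)
        exact div_nonneg (mul_nonneg (by linarith [hexp1]) (by positivity)) (by positivity)
      -- integral chain
      have hint0t : IntervalIntegrable (g k) MeasureTheory.volume 0 t := (hgc k).intervalIntegrable _ _
      have hint1 : IntervalIntegrable (g k) MeasureTheory.volume t (t+τ) := (hgc k).intervalIntegrable _ _
      have hint2 : IntervalIntegrable (g k) MeasureTheory.volume (t+τ) (t+2*τ) := (hgc k).intervalIntegrable _ _
      have hint3 : IntervalIntegrable (g k) MeasureTheory.volume t (t+2*τ) := (hgc k).intervalIntegrable _ _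
      set ρk : ℝ := (Real.exp (-4) * a k t ^ 2) *
          ((1 - Real.exp (-1)) * (Real.exp (-4) * a k t ^ 2) / (lam * M)) with hρkdef
      have hI4 : τ * ρk ≤ ∫ s in (t+τ)..(t+2*τ), g k s := by
        have hmono2 := intervalIntegral.integral_mono_on (by linarith : t+τ ≤ t+2*τ)
          (intervalIntegrable_const (c := ρk)) hint2 (fun x hx => hpt x hx)
        rw [intervalIntegral.integral_const, smul_eq_mul] at hmono2
        have he : (t+2*τ - (t+τ)) = τ := by ring
        rw [he] at hmono2
        exact hmono2
      have hI3 : 0 ≤ ∫ s in t..(t+τ), g k s :=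
        intervalIntegral.integral_nonneg (by linarith) (fun x _ => hgnn k x)
      have hI2 : ∫ s in t..(t+2*τ), g k s
          = (∫ s in t..(t+τ), g k s) + ∫ s in (t+τ)..(t+2*τ), g k s :=
        (intervalIntegral.integral_add_adjacent_intervals hint1 hint2).symm
      have hI5 : ∫ s in (0:ℝ)..(t+2*τ), g k s
          = (∫ s in (0:ℝ)..t, g k s) + ∫ s in t..(t+2*τ), g k s :=
        (intervalIntegral.integral_add_adjacent_intervals hint0t hint3).symm
      have hterm : Fn k t + (1/q^2)^k * (τ * ρk) ≤ Fn k (t+2*τ) := by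
        rw [hFndef]
        simp only []
        rw [hI5, hI2]
        have h14 : τ * ρk ≤ (∫ s in t..(t+τ), g k s) + ∫ s in (t+τ)..(t+2*τ), g k s := by
          linarith
        have h15 := mul_le_mul_of_nonneg_left h14 (hq2k k).le
        have h16 : (1/q^2)^k * ((∫ s in (0:ℝ)..t, g k s)
            + ((∫ s in t..(t+τ), g k s) + ∫ s in (t+τ)..(t+2*τ), g k s))
            = (1/q^2)^k * (∫ s in (0:ℝ)..t, g k s)
            + (1/q^2)^k * ((∫ s in t..(t+τ), g k s) + ∫ s in (t+τ)..(t+2*τ), g k s) := by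
          ring
        rw [h16]
        linarith
      -- relate ρk to the uniform rate ρ
      have hsq : ((1-q)*(L/2))^2 * (q^k)^2 ≤ (a k t ^2)^2 := by
        have h15 : ((1-q)*(L/2)*q^k)^2 ≤ (a k t^2)^2 := pow_le_pow_left₀ hδnn hk 2
        calc ((1-q)*(L/2))^2 * (q^k)^2 = ((1-q)*(L/2)*q^k)^2 := by ring
          _ ≤ _ := h15
      have hqq : (1/q^2)^k * (q^k)^2 = 1 := by
        have he : (q^k)^2 = (q^2)^k := by rw [← pow_mul, ← pow_mul, Nat.mul_comm]
        rw [he, ← mul_pow]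
        have hq2 : (1/q^2) * q^2 = 1 := by
          field_simp
        rw [hq2, one_pow]
      have hWnn : (0:ℝ) ≤ (1/q^2)^k := (hq2k k).le
      have h17 : ((1-q)*(L/2))^2 ≤ (1/q^2)^k * (a k t^2)^2 := by
        calc ((1-q)*(L/2))^2 = (1/q^2)^k * (((1-q)*(L/2))^2 * (q^k)^2) := by
              rw [show (1/q^2)^k * (((1-q)*(L/2))^2 * (q^k)^2)
                  = ((1-q)*(L/2))^2 * ((1/q^2)^k * (q^k)^2) from by ring, hqq, mul_one]
          _ ≤ (1/q^2)^k * (a k t^2)^2 := mul_le_mul_of_nonneg_left hsq hWnn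
      have hPnn : (0:ℝ) ≤ (1 - Real.exp (-1)) * (Real.exp (-4))^2 / (lam * M) :=
        div_nonneg (mul_nonneg (by linarith [hexp1]) (by positivity)) (by positivity)
      have hcore : ρ ≤ (1/q^2)^k * ρk := by
        have h18 := mul_le_mul_of_nonneg_left h17 hPnn
        rw [hρdef, hρkdef]
        calc (1 - Real.exp (-1)) * (Real.exp (-4))^2 * ((1-q)*(L/2))^2 / (lam * M)
            = (1 - Real.exp (-1)) * (Real.exp (-4))^2 / (lam*M) * ((1-q)*(L/2))^2 := by ring
          _ ≤ (1 - Real.exp (-1)) * (Real.exp (-4))^2 / (lam*M) * ((1/q^2)^k * (a k t^2)^2) := h18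
          _ = (1/q^2)^k * ((Real.exp (-4) * a k t ^ 2) *
              ((1 - Real.exp (-1)) * (Real.exp (-4) * a k t ^ 2) / (lam * M))) := by ring
      have hρle : ρ * τ ≤ (1/q^2)^k * (τ * ρk) := by
        calc ρ * τ ≤ ((1/q^2)^k * ρk) * τ := mul_le_mul_of_nonneg_right hcore hτ.le
          _ = (1/q^2)^k * (τ * ρk) := by ring
      -- sum the progress over all modes
      have hsumd : Summable (fun m => Fn m (t+2*τ) - Fn m t) :=
        (hSum (t+2*τ) (by linarith)).sub (hSum t ht)
      have hdnn : ∀ m, 0 ≤ Fn m (t+2*τ) - Fn m t := fun m =>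
        sub_nonneg.2 (hFnmono m ht (by linarith))
      have hFsplit : F (t+2*τ) = F t + ∑' m, (Fn m (t+2*τ) - Fn m t) := by
        rw [hFdef]
        simp only []
        rw [← Summable.tsum_add (hSum t ht) hsumd]
        exact tsum_congr (fun m => by ring)
      have hge : Fn k (t+2*τ) - Fn k t ≤ ∑' m, (Fn m (t+2*τ) - Fn m t) :=
        Summable.le_tsum hsumd k (fun m _ => hdnn m)
      rw [hFsplit]
      linarith
    -- the supremum argument
    set σ : ℝ := ρ/2 with hσdef
    have hσpos : 0 < σ := by rw [hσdef]; linarith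
    set A : Set ℝ := {t : ℝ | 0 ≤ t ∧ σ * t ≤ F t} with hAdef
    have h0A : (0:ℝ) ∈ A := ⟨le_rfl, by simpa using hFnonneg 0 le_rfl⟩
    have hbdd : BddAbove A := by
      refine ⟨C/σ, fun x hx => ?_⟩
      have h1 : σ * x ≤ C := le_trans hx.2 (hFle x hx.1)
      rw [le_div_iff₀ hσpos]
      linarith [h1]
    set s₀ : ℝ := sSup A with hs₀def
    have hs₀0 : 0 ≤ s₀ := le_csSup hbdd h0A
    have hFs : σ * s₀ ≤ F s₀ := by
      have h9 : ∀ x ∈ A, x ≤ F s₀ / σ := by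
        intro x hx
        have h10 : F x ≤ F s₀ := hFmono hx.1 (le_csSup hbdd hx)
        rw [le_div_iff₀ hσpos]
        nlinarith [hx.2]
      have h11 : s₀ ≤ F s₀ / σ :=
        Real.sSup_le h9 (div_nonneg (hFnonneg s₀ hs₀0) hσpos.le)
      rw [le_div_iff₀ hσpos] at h11
      linarith
    obtain ⟨τ, hτ, hstep₀⟩ := hstep s₀ hs₀0
    have hmem : s₀ + 2*τ ∈ A := by
      refine ⟨by linarith, ?_⟩
      have h12 : σ * (s₀ + 2*τ) = σ * s₀ + ρ * τ := by rw [hσdef]; ring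
      rw [h12]
      linarith
    have := le_csSup hbdd hmem
    linarith
  -- conclude
  rw [Metric.tendsto_atTop]
  intro ε hε
  obtain ⟨t0, ht0, hlt⟩ := key ε hε
  refine ⟨t0, fun t ht => ?_⟩
  have h1 : E t ≤ E t0 := hEanti ht0 ht
  rw [Real.dist_eq, sub_zero, abs_of_nonneg (hEnonneg t)]
  exact lt_of_le_of_lt h1 hlt
end

section
/- For every ν > 0 there exists a unique componentwise-positive, finite-energy fixed point a^{ν,*} of the viscous forced dyadic model, i.e. a unique sequence with a^{ν,*}_j > 0 for all j ≥ 0 and Σ_{j≥0} (a^{ν,*}_j)² < ∞ satisfying −ν λ_j² a^{ν,*}_j + λ_j^θ (a^{ν,*}_{j-1})² − λ_{j+1}^θ a^{ν,*}_j a^{ν,*}_{j+1} + f_j = 0 for all j ≥ 0, and its energy dissipation rate ε^ν := ν Σ_{j≥0} λ_j² (a^{ν,*}_j)² satisfies ε^ν = f_0 a^{ν,*}_0. Moreover, as ν → 0, a^{ν,*} converges in ℓ² to the inviscid fixed point a* given by a*_j = f_0^{1/2} λ^{−θ(j+1)/3}, and the dissipation anomaly holds: lim_{ν→0} ε^ν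 = f_0 a*_0 > 0. -/
open MeasureTheory Filter
open scoped ENNReal

/-- A (time-independent) fixed point of the viscous forced dyadic model:
`−ν λ_j² c_j + λ_j^θ c_{j-1}² − λ_{j+1}^θ c_j c_{j+1} + f_j = 0`, with
`λ_j = lam ^ j`, `c_{-1} = 0`, `f_0 = f0` and `f_j = 0` for `j ≥ 1`. -/
def IsViscFixedPt (lam θ f0 ν : ℝ) (c : ℕ → ℝ) : Prop :=
  ∀ j : ℕ,
    -(ν * (lam ^ j) ^ 2 * c j)
      + (lam ^ j) ^ θ * (if j = 0 then (0 : ℝ) else c (j - 1)) ^ 2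
      - (lam ^ (j + 1)) ^ θ * c j * c (j + 1) + (if j = 0 then f0 else 0) = 0

/-- The inviscid fixed point `a*_j = f₀^{1/2} λ^{−θ(j+1)/3}`. -/
noncomputable def astar (lam θ f0 : ℝ) (j : ℕ) : ℝ :=
  Real.sqrt f0 * lam ^ (-(θ * ((j : ℝ) + 1)) / 3)

open scoped Topology

namespace CFAux

section Core
variable {δ q : ℝ} {B C : ℕ → ℝ}

/-- Normalized dyadic fixed-point recursion: `B 0 = 1`,
`B j ^ 2 = B (j+1) * (B (j+2) + δ q^j)`. -/
def RecB (δ q : ℝ) (B : ℕ → ℝ) : Prop :=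
  B 0 = 1 ∧ ∀ j, B j ^ 2 = B (j + 1) * (B (j + 2) + δ * q ^ j)

variable {δ q : ℝ} {B : ℕ → ℝ}

lemma flux (hδ : 0 ≤ δ) (hq : 0 < q) (hB : RecB δ q B) (hpos : ∀ j, 0 < B j) (j : ℕ) :
    B (j + 1) * B (j + 2) ≤ B j ^ 2 := by
  have h := hB.2 j
  nlinarith [ (hpos (j+1)).le, pow_pos hq j, mul_nonneg (mul_nonneg hδ (pow_pos hq j).le) (hpos (j+1)).le ]

lemma pchain (hδ : 0 ≤ δ) (hq : 0 < q) (hB : RecB δ q B) (hpos : ∀ j, 0 < B j) :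
    ∀ j, B (j + 1) * B j ^ 2 ≤ B 1 := by
  intro j
  induction j with
  | zero => simp [hB.1]
  | succ n ih =>
      have h1 : B (n + 2) * B (n + 1) ≤ B n ^ 2 := by
        have := flux hδ hq hB hpos n; nlinarith
      calc B (n + 2) * B (n + 1) ^ 2 = (B (n + 2) * B (n + 1)) * B (n + 1) := by ring
        _ ≤ B n ^ 2 * B (n + 1) := by
            exact mul_le_mul_of_nonneg_right h1 (hpos (n+1)).le
        _ = B (n + 1) * B n ^ 2 := by ring
        _ ≤ B 1 := ih

lemma partial_sum (hB : RecB δ q B) :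
    ∀ N, ∑ j ∈ Finset.range N, δ * q ^ j * B (j + 1) ^ 2 = B 1 - B N ^ 2 * B (N + 1) := by
  intro N
  induction N with
  | zero => simp [hB.1]
  | succ n ih =>
      rw [Finset.sum_range_succ, ih]
      have h := hB.2 n
      linear_combination (-B (n + 1)) * h

lemma term_le (hδ : 0 ≤ δ) (hq : 0 < q) (hB : RecB δ q B) (hpos : ∀ j, 0 < B j) (j : ℕ) :
    δ * q ^ j * B (j + 1) ^ 2 ≤ B 1 := by
  have h1 : ∀ i ∈ Finset.range (j + 1), 0 ≤ δ * q ^ i * B (i + 1) ^ 2 := fun i _ =>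
    mul_nonneg (mul_nonneg hδ (pow_pos hq i).le) (sq_nonneg _)
  have h2 := Finset.single_le_sum h1 (Finset.mem_range.2 (Nat.lt_succ_self j))
  have h3 := partial_sum hB (j + 1)
  nlinarith [mul_nonneg (sq_nonneg (B (j+1))) (hpos (j+2)).le]

lemma tendsto_zero (hδ : 0 < δ) (hq : 1 < q) (hB : RecB δ q B) (hpos : ∀ j, 0 < B j) :
    Tendsto B atTop (𝓝 0) := by
  have hq0 : 0 < q := lt_trans one_pos hq
  have hsq : Tendsto (fun j : ℕ => B (j + 1) ^ 2) atTop (𝓝 0) := by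
    apply squeeze_zero (fun n => sq_nonneg _) (g := fun j => (B 1 / δ) * (1 / q) ^ j)
    · intro j
      have h := term_le hδ.le (lt_trans one_pos hq) hB hpos j
      have hqj : 0 < q ^ j := pow_pos hq0 j
      rw [div_pow, one_pow, mul_one_div, le_div_iff₀ hqj, le_div_iff₀ hδ]
      nlinarith [h]
    · simpa using (tendsto_pow_atTop_nhds_zero_of_lt_one
        (le_of_lt (div_pos one_pos hq0)) ((div_lt_one hq0).2 hq)).const_mul (B 1 / δ)
  have h1 : Tendsto (fun j : ℕ => B (j + 1)) atTop (𝓝 0) := by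
    have := (Real.continuous_sqrt.tendsto 0).comp hsq
    simp only [Function.comp_def, Real.sqrt_zero] at this
    convert this using 2 with j
    rw [Real.sqrt_sq (hpos _).le]
  exact (tendsto_add_atTop_iff_nat 1).1 h1

lemma hasSum_energy (hδ : 0 < δ) (hq : 1 < q) (hB : RecB δ q B) (hpos : ∀ j, 0 < B j) :
    HasSum (fun j => δ * q ^ j * B (j + 1) ^ 2) (B 1) := by
  have hq0 : 0 < q := lt_trans one_pos hq
  rw [hasSum_iff_tendsto_nat_of_nonneg
    (fun i => mul_nonneg (mul_nonneg hδ.le (pow_pos hq0 i).le) (sq_nonneg _))]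
  have hps : ∀ N, ∑ j ∈ Finset.range N, δ * q ^ j * B (j + 1) ^ 2
      = B 1 - B N ^ 2 * B (N + 1) := by
    intro N
    induction N with
    | zero => simp [hB.1]
    | succ n ih =>
        rw [Finset.sum_range_succ, ih]
        linear_combination (-B (n + 1)) * hB.2 n
  simp only [hps]
  have hz := tendsto_zero hδ hq hB hpos
  have hz1 : Tendsto (fun N : ℕ => B (N + 1)) atTop (𝓝 0) :=
    (tendsto_add_atTop_iff_nat 1).2 hz
  have : Tendsto (fun N : ℕ => B N ^ 2 * B (N + 1)) atTop (𝓝 0) := by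
    have := ((hz.pow 2).mul hz1)
    simpa using this
  simpa using tendsto_const_nhds.sub this

lemma sup_bound (hδ : 0 < δ) (hq : 1 < q) (hB : RecB δ q B) (hpos : ∀ j, 0 < B j) (j : ℕ) :
    B j ≤ max 1 (Real.sqrt q) := by
  set K := max 1 (Real.sqrt q) with hK
  have hK1 : (1:ℝ) ≤ K := le_max_left _ _
  by_contra hcon
  push_neg at hcon
  -- eventual smallness
  have hz := tendsto_zero hδ hq hB hpos
  have hev : ∀ᶠ i in atTop, B i < 1 := by
    filter_upwards [hz (Ioo_mem_nhds (show (-1:ℝ) < 0 by norm_num) (show (0:ℝ) < 1 by norm_num))] with i hi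
    exact hi.2
  obtain ⟨N, hN⟩ := eventually_atTop.1 hev
  obtain ⟨J, hJmem, hJmax⟩ := Finset.exists_max_image (Finset.range (N + 1)) B
    ⟨0, Finset.mem_range.2 (Nat.succ_pos N)⟩
  set M := B J with hM
  have hMK : K < M := by
    rcases le_or_gt j N with h | h
    · exact lt_of_lt_of_le hcon (hJmax j (Finset.mem_range.2 (Nat.lt_succ_of_le h)))
    · exact absurd (le_of_lt (lt_of_lt_of_le (hN j h.le) hK1)) (not_le.2 hcon)
  have hMall : ∀ i, B i ≤ M := by
    intro i
    rcases le_or_gt i N with h | h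
    · exact hJmax i (Finset.mem_range.2 (Nat.lt_succ_of_le h))
    · exact le_trans (hN i h.le).le (le_trans hK1 hMK.le)
  have hM0 : 0 < M := hpos J
  have hJ1 : 1 ≤ J := by
    by_contra hJ0
    push_neg at hJ0
    interval_cases J
    · rw [hM, hB.1] at hMK; exact absurd hMK (not_lt.2 hK1)
  obtain ⟨J', rfl⟩ : ∃ J', J = J' + 1 := ⟨J - 1, (Nat.succ_pred_eq_of_pos hJ1).symm⟩
  have hq0 : 0 < q := lt_trans one_pos hq
  set s := δ * q ^ J' with hs
  have hs0 : 0 < s := mul_pos hδ (pow_pos (lt_trans one_pos hq) J')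
  -- eq at J'
  have e1 : B J' ^ 2 = M * (B (J' + 2) + s) := hB.2 J'
  have hup : B (J' + 2) ≤ M - s := by
    have h1 : M * (B (J' + 2) + s) ≤ M ^ 2 := by
      rw [← e1]
      have := hMall J'
      nlinarith [hpos J']
    nlinarith
  -- eq at J'+1
  have e2 : M ^ 2 = B (J' + 2) * (B (J' + 3) + δ * q ^ (J' + 1)) := hB.2 (J' + 1)
  have e2' : M ^ 2 ≤ B (J' + 2) * (M + q * s) := by
    rw [e2]
    have h3 : B (J' + 3) + δ * q ^ (J' + 1) ≤ M + q * s := by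
      have := hMall (J' + 3)
      have : δ * q ^ (J' + 1) = q * s := by rw [hs]; ring
      nlinarith [hMall (J' + 3)]
    exact mul_le_mul_of_nonneg_left h3 (hpos _).le
  -- q s ≤ (q-1) M
  have h6 : M ^ 2 ≤ (M - s) * (M + q * s) := by
    refine le_trans e2' (mul_le_mul_of_nonneg_right hup ?_)
    nlinarith [hs0, hM0, (pow_pos hq0 J')]
  have hqs : q * s ≤ (q - 1) * M := by
    nlinarith [h6, hs0]
  -- B (J'+2) ≥ M / q
  have hlow : M ≤ q * B (J' + 2) := by
    have h4 : M ^ 2 ≤ B (J' + 2) * (q * M) := by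
      calc M ^ 2 ≤ B (J' + 2) * (M + q * s) := e2'
        _ ≤ B (J' + 2) * (M + (q - 1) * M) := by
            exact mul_le_mul_of_nonneg_left (by linarith) (hpos _).le
        _ = B (J' + 2) * (q * M) := by ring
    nlinarith [hpos (J' + 2), hM0]
  -- p-chain
  have hpch : B (J' + 2) * B (J' + 1) ^ 2 ≤ B 1 := pchain hδ.le (lt_trans one_pos hq) hB hpos (J' + 1)
  have hB1M : B 1 ≤ M := hMall 1
  have hMq : M ^ 2 ≤ q := by
    have h5 : (M / q) * M ^ 2 ≤ M := by
      calc (M / q) * M ^ 2 ≤ B (J' + 2) * M ^ 2 := by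
            apply mul_le_mul_of_nonneg_right _ (sq_nonneg M)
            rw [div_le_iff₀ (lt_trans one_pos hq)]
            linarith [hlow]
        _ ≤ B 1 := hpch
        _ ≤ M := hB1M
    have hq0 : 0 < q := lt_trans one_pos hq
    rw [div_mul_eq_mul_div, div_le_iff₀ hq0] at h5
    nlinarith
  have : M ≤ Real.sqrt q := (Real.le_sqrt hM0.le (le_trans (sq_nonneg M) hMq)).2 hMq
  exact absurd (le_trans this (le_max_right 1 _)) (not_le.2 hMK)

/-- Key alternation/blow-up step for uniqueness. -/
lemma uniq_aux (hδ : 0 < δ) (hq : 1 < q) (hB : RecB δ q B) (hBpos : ∀ j, 0 < B j)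
    (hC : RecB δ q C) (hCpos : ∀ j, 0 < C j) (h1 : B 1 < C 1) : False := by
  have hq0 : 0 < q := lt_trans one_pos hq
  set K := max 1 (Real.sqrt q) with hK
  have hK0 : 0 < K := lt_of_lt_of_le one_pos (le_max_left _ _)
  set d : ℕ → ℝ := fun j => (-1 : ℝ) ^ j * (B j - C j) with hd
  have hd0 : d 0 = 0 := by simp [hd, hB.1, hC.1]
  have hd1 : 0 < d 1 := by simp [hd]; linarith
  have hiden : ∀ j, C (j + 1) * d (j + 2)
      = d j * (B j + C j) + d (j + 1) * (B (j + 2) + δ * q ^ j) := by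
    intro j
    simp only [hd]
    have e1 := hB.2 j
    have e2 := hC.2 j
    calc C (j+1) * ((-1:ℝ)^(j+2) * (B (j+2) - C (j+2)))
        = (-1:ℝ)^j * (C (j+1) * (B (j+2) - C (j+2))) := by ring
      _ = (-1:ℝ)^j * ((B j ^2 - C j ^2) - (B (j+1) - C (j+1)) * (B (j+2) + δ * q ^ j)) := by
          rw [e1, e2]; ring
      _ = (-1:ℝ)^j * (B j - C j) * (B j + C j)
          + (-1:ℝ)^(j+1) * (B (j+1) - C (j+1)) * (B (j+2) + δ * q ^ j) := by ring
  have hdpos : ∀ j, 0 ≤ d j ∧ 0 < d (j + 1) := by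
    intro j
    induction j with
    | zero => exact ⟨le_of_eq hd0.symm, hd1⟩
    | succ n ih =>
        refine ⟨ih.2.le, ?_⟩
        have := hiden n
        have hpos2 : 0 < B (n + 2) + δ * q ^ n := by
          have := hBpos (n + 2); have := mul_pos hδ (pow_pos hq0 n); linarith
        have hnum : 0 < d n * (B n + C n) + d (n + 1) * (B (n + 2) + δ * q ^ n) := by
          have h01 : 0 ≤ d n * (B n + C n) :=
            mul_nonneg ih.1 (by have := hBpos n; have := hCpos n; linarith)
          have h02 : 0 < d (n + 1) * (B (n + 2) + δ * q ^ n) := mul_pos ih.2 hpos2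
          linarith
        have hCp := hCpos (n + 1)
        nlinarith [this]
  -- choose J with δ q^J ≥ K
  obtain ⟨J, hJ⟩ : ∃ J, K / δ < q ^ J := pow_unbounded_of_one_lt _ hq
  have hgrow : ∀ j, J ≤ j → d (j + 1) ≤ d (j + 2) := by
    intro j hj
    have hqJ : K ≤ δ * q ^ j := by
      have h2 : q ^ J ≤ q ^ j := pow_le_pow_right₀ hq.le hj
      rw [div_lt_iff₀ hδ] at hJ
      nlinarith
    have hCK : C (j + 1) ≤ K := sup_bound hδ hq hC hCpos (j + 1)
    have := hiden j
    have h01 : 0 ≤ d j * (B j + C j) :=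
      mul_nonneg (hdpos j).1 (by have := hBpos j; have := hCpos j; linarith)
    have hd1p : 0 < d (j + 1) := (hdpos j).2
    have hCp := hCpos (j + 1)
    -- C_{j+1} d_{j+2} ≥ d_{j+1} (B_{j+2} + δ q^j) ≥ d_{j+1} δ q^j ≥ d_{j+1} K ≥ d_{j+1} C_{j+1}
    have hstep : C (j + 1) * d (j + 2) ≥ d (j + 1) * C (j + 1) := by
      have hBp2 := hBpos (j + 2)
      nlinarith [this]
    nlinarith [hstep, hCp]
  have hmono : ∀ i, d (J + 1) ≤ d (J + 1 + i) := by
    intro i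
    induction i with
    | zero => exact le_rfl
    | succ n ih =>
        have h := hgrow (J + n) (Nat.le_add_right _ _)
        have e1 : J + n + 1 = J + 1 + n := by omega
        have e2 : J + n + 2 = J + 1 + (n + 1) := by omega
        rw [e1, e2] at h
        exact le_trans ih h
  -- contradiction with decay
  have hBz := tendsto_zero hδ hq hB hBpos
  have hCz := tendsto_zero hδ hq hC hCpos
  have hsum : Tendsto (fun i => B i + C i) atTop (𝓝 0) := by simpa using hBz.add hCz
  have hev : ∀ᶠ i in atTop, B i + C i < d (J + 1) :=
    hsum (Iio_mem_nhds (hdpos J).2)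
  obtain ⟨N, hN⟩ := eventually_atTop.1 hev
  have hi1 : B (N + J + 1) + C (N + J + 1) < d (J + 1) := hN _ (by omega)
  have hdle : d (N + J + 1) ≤ B (N + J + 1) + C (N + J + 1) := by
    have hBp := hBpos (N + J + 1); have hCp := hCpos (N + J + 1)
    rcases Nat.even_or_odd (N + J + 1) with he | ho
    · simp only [hd, he.neg_one_pow, one_mul]; linarith
    · simp only [hd, ho.neg_one_pow, neg_one_mul, neg_sub]; linarith
  have hm := hmono N
  rw [show J + 1 + N = N + J + 1 by omega] at hm
  linarith

lemma uniq (hδ : 0 < δ) (hq : 1 < q) (hB : RecB δ q B) (hBpos : ∀ j, 0 < B j)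
    (hC : RecB δ q C) (hCpos : ∀ j, 0 < C j) : B = C := by
  have h1 : B 1 = C 1 := by
    rcases lt_trichotomy (B 1) (C 1) with h | h | h
    · exact absurd (uniq_aux hδ hq hB hBpos hC hCpos h) id
    · exact h
    · exact absurd (uniq_aux hδ hq hC hCpos hB hBpos h) id
  funext j
  induction j using Nat.strong_induction_on with
  | _ j ih =>
      match j with
      | 0 => rw [hB.1, hC.1]
      | 1 => exact h1
      | (n + 2) =>
          have e1 := hB.2 n
          have e2 := hC.2 n
          have hBn : B n = C n := ih n (by omega)
          have hBn1 : B (n + 1) = C (n + 1) := ih (n + 1) (by omega)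
          rw [hBn, hBn1] at e1
          have := e1.symm.trans e2
          have hCn1 := hCpos (n + 1)
          have := mul_left_cancel₀ (ne_of_gt hCn1) this.symm
          linarith

/-- Inviscid rigidity: a positive bounded solution of the `δ = 0` recursion is ≡ 1. -/
lemma inviscid (hq : 1 < q) {M : ℝ} (hB : RecB 0 q B) (hpos : ∀ j, 0 < B j)
    (hbd : ∀ j, B j ≤ M) : ∀ j, B j = 1 := by
  set L : ℕ → ℝ := fun j => Real.log (B j) with hLdef
  have hL0 : L 0 = 0 := by simp [hLdef, hB.1]
  have hrec : ∀ j, 2 * L j = L (j + 1) + L (j + 2) := by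
    intro j
    have e := hB.2 j
    have : B j ^ 2 = B (j + 1) * B (j + 2) := by simpa using e
    have h2 : Real.log (B j ^ 2) = Real.log (B (j + 1) * B (j + 2)) := by rw [this]
    rw [Real.log_pow, Real.log_mul (ne_of_gt (hpos _)) (ne_of_gt (hpos _))] at h2
    simpa [hLdef] using h2
  have hstep : ∀ j, L (j + 1) = L 1 - 2 * L j := by
    intro j
    induction j with
    | zero => rw [hL0]; ring
    | succ n ih =>
        have := hrec n
        rw [ih] at this
        linarith
  have hcf : ∀ j, 3 * L j = L 1 * (1 - (-2 : ℝ) ^ j) := by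
    intro j
    induction j with
    | zero => simp [hL0]
    | succ n ih =>
        rw [hstep n]
        rw [pow_succ]
        linarith [ih]
  have hMpos : 0 < M := lt_of_lt_of_le (hpos 0) (hbd 0)
  set R := max (Real.log M) 0 with hR
  have hR0 : 0 ≤ R := le_max_right _ _
  have hLbd : ∀ j, L j ≤ R := fun j =>
    le_trans (Real.log_le_log (hpos j) (hbd j)) (le_max_left _ _)
  have hL1 : L 1 = 0 := by
    rcases lt_trichotomy (L 1) 0 with h | h | h
    · -- even j = 2k: 3 L (2k) = L1 (1 - 4^k) = |L1| (4^k - 1) → ∞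
      exfalso
      obtain ⟨k, hk⟩ : ∃ k : ℕ, (3 * R + 1 - 2 * L 1) / (-L 1) < (4:ℝ) ^ k :=
        pow_unbounded_of_one_lt _ (by norm_num)
      have hpow : ((-2 : ℝ)) ^ (2 * k) = (4 : ℝ) ^ k := by
        rw [pow_mul]; norm_num
      have := hcf (2 * k)
      rw [hpow] at this
      have hb := hLbd (2 * k)
      rw [div_lt_iff₀ (by linarith : (0:ℝ) < -L 1)] at hk
      nlinarith [hLbd 1, hR0]
    · exact h
    · -- odd j = 2k+1 : 3 L(2k+1) = L1 (1 + 2*4^k) → ∞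
      exfalso
      obtain ⟨k, hk⟩ : ∃ k : ℕ, (3 * R + 1 - L 1) / L 1 < (4:ℝ) ^ k :=
        pow_unbounded_of_one_lt _ (by norm_num)
      have hpow : ((-2 : ℝ)) ^ (2 * k + 1) = -(2 * (4 : ℝ) ^ k) := by
        rw [pow_succ, pow_mul]; norm_num; ring
      have := hcf (2 * k + 1)
      rw [hpow] at this
      have hb := hLbd (2 * k + 1)
      rw [div_lt_iff₀ h] at hk
      nlinarith [pow_pos (show (0:ℝ) < 4 by norm_num) k, hLbd 1, hR0]
  intro j
  have : L j = 0 := by have := hcf j; rw [hL1] at this; linarith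
  have := Real.exp_log (hpos j)
  rw [show Real.log (B j) = L j from rfl, this] at *
  rw [← Real.exp_log (hpos j), show Real.log (B j) = L j from rfl, ‹L j = 0›, Real.exp_zero]


end Core

section Galerkin
variable {δ q : ℝ}

lemma tendsto_sqrt_atTop : Tendsto Real.sqrt atTop atTop := by
  rw [tendsto_atTop_atTop]
  intro b
  exact ⟨(max b 0) ^ 2, fun a ha => le_trans (le_max_left b 0)
    (by rw [← Real.sqrt_sq (le_max_right b 0)]; exact Real.sqrt_le_sqrt ha)⟩

/-- Backward Galerkin construction, `gal δ q n t i = (B_{n+1-i}, B_{n+2-i})`. -/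
noncomputable def gal (δ q : ℝ) (n : ℕ) (t : ℝ) : ℕ → ℝ × ℝ
  | 0 => (t, 0)
  | i + 1 => (Real.sqrt ((gal δ q n t i).1 * ((gal δ q n t i).2 + δ * q ^ (n - i))),
      (gal δ q n t i).1)

lemma gal_succ (n : ℕ) (t : ℝ) (i : ℕ) :
    gal δ q n t (i + 1) = (Real.sqrt ((gal δ q n t i).1 * ((gal δ q n t i).2 + δ * q ^ (n - i))),
      (gal δ q n t i).1) := rfl

lemma gal_pos (hδ : 0 < δ) (hq : 0 < q) (n : ℕ) {t : ℝ} (ht : 0 < t) :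
    ∀ i, 0 < (gal δ q n t i).1 ∧ 0 ≤ (gal δ q n t i).2 := by
  intro i
  induction i with
  | zero => exact ⟨ht, le_rfl⟩
  | succ m ih =>
      rw [gal_succ]
      refine ⟨Real.sqrt_pos.2 (mul_pos ih.1 ?_), ih.1.le⟩
      have := mul_pos hδ (pow_pos hq (n - m))
      linarith [ih.2]

lemma gal_at_zero {n : ℕ} : ∀ i, gal δ q n (0:ℝ) i = (0, 0) := by
  intro i
  induction i with
  | zero => rfl
  | succ m ih => rw [gal_succ, ih]; simp

lemma gal_cont {n : ℕ} : ∀ i, Continuous (fun t => (gal δ q n t i).1)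
    ∧ Continuous (fun t => (gal δ q n t i).2) := by
  intro i
  induction i with
  | zero => exact ⟨continuous_id, continuous_const⟩
  | succ m ih =>
      constructor
      · simp only [gal_succ]
        exact Real.continuous_sqrt.comp ((ih.1).mul ((ih.2).add continuous_const))
      · simp only [gal_succ]
        exact ih.1

lemma gal_top (hδ : 0 < δ) (hq : 0 < q) {n : ℕ} :
    ∀ i, Tendsto (fun t => (gal δ q n t i).1) atTop atTop := by
  intro i
  induction i with
  | zero => exact tendsto_id
  | succ m ih =>
      have hc : 0 < δ * q ^ (n - m) := mul_pos hδ (pow_pos hq _)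
      have h1 : Tendsto (fun t => Real.sqrt (δ * q ^ (n - m) * (gal δ q n t m).1))
          atTop atTop := tendsto_sqrt_atTop.comp (ih.const_mul_atTop hc)
      apply tendsto_atTop_mono' _ _ h1
      filter_upwards [eventually_gt_atTop 0] with t ht
      have hp := gal_pos hδ hq n ht m
      simp only [gal_succ]
      apply Real.sqrt_le_sqrt
      nlinarith [hp.1, hp.2]

def GalSol (δ q : ℝ) (n : ℕ) (B : ℕ → ℝ) : Prop :=
  B 0 = 1 ∧ (∀ j, j ≤ n + 1 → 0 < B j) ∧ (∀ j, n + 2 ≤ j → B j = 0) ∧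
  ∀ j, j ≤ n → B j ^ 2 = B (j + 1) * (B (j + 2) + δ * q ^ j)

lemma exists_galSol (hδ : 0 < δ) (hq : 0 < q) (n : ℕ) : ∃ B, GalSol δ q n B := by
  set F : ℝ → ℝ := fun t => (gal δ q n t (n + 1)).1 with hF
  have hF0 : F 0 = 0 := by rw [hF]; simp [gal_at_zero]
  obtain ⟨t1, hFt1, ht10⟩ :=
    (((gal_top hδ hq (n + 1)).eventually_ge_atTop 1).and (eventually_ge_atTop (0:ℝ))).exists
  have hsub : Set.Icc (F 0) (F t1) ⊆ F '' Set.Icc 0 t1 :=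
    intermediate_value_Icc ht10 ((gal_cont (n + 1)).1).continuousOn
  have h1mem : (1:ℝ) ∈ Set.Icc (F 0) (F t1) := by rw [hF0]; exact ⟨zero_le_one, hFt1⟩
  obtain ⟨t, htmem, htF⟩ := hsub h1mem
  have ht : 0 < t := by
    rcases lt_or_eq_of_le htmem.1 with h | h
    · exact h
    · exfalso; rw [← h] at htF; rw [hF0] at htF; norm_num at htF
  refine ⟨fun j => if j ≤ n + 1 then (gal δ q n t (n + 1 - j)).1 else 0, ?_, ?_, ?_, ?_⟩
  · simpa using htF
  · intro j hj
    simp only [if_pos hj]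
    exact (gal_pos hδ hq n ht _).1
  · intro j hj
    simp only [if_neg (by omega : ¬ j ≤ n + 1)]
  · intro j hj
    have e1 : n + 1 - j = (n - j) + 1 := by omega
    have e2 : n + 1 - (j + 1) = n - j := by omega
    have e3 : n - (n - j) = j := by omega
    simp only [if_pos (by omega : j ≤ n + 1), if_pos (by omega : j + 1 ≤ n + 1)]
    rw [e1, e2]
    show (gal δ q n t ((n-j)+1)).1 ^ 2 = (gal δ q n t (n-j)).1 * (_ + δ * q ^ j)
    have hgal : (gal δ q n t ((n-j)+1)).1
        = Real.sqrt ((gal δ q n t (n-j)).1 * ((gal δ q n t (n-j)).2 + δ * q ^ (n - (n-j)))) := rfl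
    rw [hgal, e3]
    have hp := gal_pos hδ hq n ht (n - j)
    have hnn : 0 ≤ (gal δ q n t (n-j)).1 * ((gal δ q n t (n-j)).2 + δ * q ^ j) := by
      have := mul_pos hδ (pow_pos hq j)
      nlinarith [hp.1, hp.2]
    rw [Real.sq_sqrt hnn]
    congr 1
    congr 1
    -- (gal (n-j)).2 = B (j+2)
    rcases Nat.eq_or_lt_of_le hj with hje | hjl
    · -- j = n
      rw [if_neg (by omega : ¬ j + 2 ≤ n + 1)]
      rw [show n - j = 0 by omega]
      rfl
    · rw [if_pos (by omega : j + 2 ≤ n + 1)]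
      have e4 : n - j = (n - j - 1) + 1 := by omega
      have e5 : n + 1 - (j + 2) = n - j - 1 := by omega
      rw [e4, e5]
      rfl

/-- A priori upper bounds, independent of the truncation level. -/
noncomputable def ub (δ q : ℝ) : ℕ → ℝ
  | 0 => 1
  | j + 1 => ub δ q j ^ 2 / (δ * q ^ j)

/-- A priori lower bounds, independent of the truncation level. -/
noncomputable def lo (δ q : ℝ) : ℕ → ℝ
  | 0 => 1
  | j + 1 => lo δ q j ^ 2 / (ub δ q (j + 2) + δ * q ^ j)

lemma ub_pos (hδ : 0 < δ) (hq : 0 < q) : ∀ j, 0 < ub δ q j := by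
  intro j
  induction j with
  | zero => exact one_pos
  | succ n ih => exact div_pos (pow_pos ih 2) (mul_pos hδ (pow_pos hq n))

lemma lo_pos (hδ : 0 < δ) (hq : 0 < q) : ∀ j, 0 < lo δ q j := by
  intro j
  induction j with
  | zero => exact one_pos
  | succ n ih =>
      exact div_pos (pow_pos ih 2)
        (by have := ub_pos hδ hq (n + 2); have := mul_pos hδ (pow_pos hq n); linarith)

lemma galSol_nonneg {n : ℕ} {B : ℕ → ℝ} (hB : GalSol δ q n B) (j : ℕ) : 0 ≤ B j := by
  rcases le_or_gt j (n + 1) with h | h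
  · exact (hB.2.1 j h).le
  · rw [hB.2.2.1 j (by omega)]

lemma galSol_le_ub (hδ : 0 < δ) (hq : 0 < q) {n : ℕ} {B : ℕ → ℝ} (hB : GalSol δ q n B) :
    ∀ j, B j ≤ ub δ q j := by
  intro j
  induction j with
  | zero => rw [hB.1]; exact le_rfl
  | succ m ih =>
      rcases le_or_gt (n + 2) (m + 1) with h | h
      · rw [hB.2.2.1 _ h]; exact (ub_pos hδ hq _).le
      · have hm : m ≤ n := by omega
        have heq := hB.2.2.2 m hm
        have hqm : 0 < δ * q ^ m := mul_pos hδ (pow_pos hq m)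
        have h1 : B (m + 1) * (δ * q ^ m) ≤ B m ^ 2 := by
          nlinarith [galSol_nonneg hB (m + 2), hB.2.1 (m + 1) (by omega)]
        have h2 : B m ^ 2 ≤ ub δ q m ^ 2 := by
          have := galSol_nonneg hB m
          nlinarith [ih]
        show B (m + 1) ≤ ub δ q m ^ 2 / (δ * q ^ m)
        rw [le_div_iff₀ hqm]
        linarith
      
lemma galSol_ge_lo (hδ : 0 < δ) (hq : 0 < q) {n : ℕ} {B : ℕ → ℝ} (hB : GalSol δ q n B) :
    ∀ j, j ≤ n + 1 → lo δ q j ≤ B j := by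
  intro j
  induction j with
  | zero => intro _; rw [hB.1]; exact le_rfl
  | succ m ih =>
      intro hm1
      have hm : m ≤ n := by omega
      have heq := hB.2.2.2 m hm
      have hqm : 0 < δ * q ^ m := mul_pos hδ (pow_pos hq m)
      have hden : 0 < B (m + 2) + δ * q ^ m := by
        have := galSol_nonneg hB (m + 2); linarith
      have hub2 : B (m + 2) ≤ ub δ q (m + 2) := galSol_le_ub hδ hq hB (m + 2)
      have hlom : lo δ q m ≤ B m := ih (by omega)
      have hlop : 0 < lo δ q m := lo_pos hδ hq m
      show lo δ q m ^ 2 / (ub δ q (m + 2) + δ * q ^ m) ≤ B (m + 1)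
      rw [div_le_iff₀ (by have := ub_pos hδ hq (m + 2); linarith)]
      have hB1 : B (m + 1) = B m ^ 2 / (B (m + 2) + δ * q ^ m) := by
        field_simp at heq ⊢
        linarith [heq]
      rw [hB1, div_mul_eq_mul_div, le_div_iff₀ hden]
      have h3 : lo δ q m ^ 2 ≤ B m ^ 2 := by nlinarith
      nlinarith [sq_nonneg (B m), hden, hub2]

/-- Sequential compactness extraction in the product of intervals. -/
lemma exists_subseq_lim {l u : ℕ → ℝ} (F : ℕ → ℕ → ℝ)
    (hF : ∀ n j, F n j ∈ Set.Icc (l j) (u j)) :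
    ∃ (L : ℕ → ℝ) (φ : ℕ → ℕ), StrictMono φ ∧ (∀ j, L j ∈ Set.Icc (l j) (u j)) ∧
      ∀ j, Tendsto (fun n => F (φ n) j) atTop (𝓝 (L j)) := by
  have hc : IsCompact (Set.univ.pi fun j : ℕ => Set.Icc (l j) (u j)) :=
    isCompact_univ_pi fun j => isCompact_Icc
  have hmem : ∀ n, F n ∈ Set.univ.pi fun j : ℕ => Set.Icc (l j) (u j) := by
    intro n
    rw [Set.mem_univ_pi]
    exact fun j => hF n j
  obtain ⟨L, hL, φ, hφ, hconv⟩ := hc.isSeqCompact hmem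
  refine ⟨L, φ, hφ, ?_, ?_⟩
  · rw [Set.mem_univ_pi] at hL; exact hL
  · exact fun j => (tendsto_pi_nhds.1 hconv) j

lemma exists_recB (hδ : 0 < δ) (hq : 0 < q) : ∃ B, RecB δ q B ∧ ∀ j, 0 < B j := by
  choose G hG using fun n => exists_galSol (δ := δ) (q := q) hδ hq n
  have hlo_le_ub : ∀ j, lo δ q j ≤ ub δ q j := by
    intro j
    -- via G j : both bounds hold for B := G j at index j ≤ j + 1
    have h1 := galSol_ge_lo hδ hq (hG j) j (by omega)
    have h2 := galSol_le_ub hδ hq (hG j) j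
    linarith
  set F : ℕ → ℕ → ℝ := fun n j => max (G n j) (lo δ q j) with hFdef
  have hF : ∀ n j, F n j ∈ Set.Icc (lo δ q j) (ub δ q j) := by
    intro n j
    constructor
    · exact le_max_right _ _
    · apply max_le (galSol_le_ub hδ hq (hG n) j) (hlo_le_ub j)
  obtain ⟨L, φ, hφ, hLmem, hconv⟩ := exists_subseq_lim F hF
  have hFeq : ∀ n j, j ≤ n + 1 → F n j = G n j := by
    intro n j hj
    exact max_eq_left (galSol_ge_lo hδ hq (hG n) j hj)
  have hφ_top : Tendsto φ atTop atTop := hφ.tendsto_atTop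
  refine ⟨L, ⟨?_, ?_⟩, ?_⟩
  · -- L 0 = 1
    have : ∀ n, F n 0 = 1 := fun n => by rw [hFeq n 0 (by omega), (hG n).1]
    have h2 : Tendsto (fun n => F (φ n) 0) atTop (𝓝 1) := by
      simp only [this]; exact tendsto_const_nhds
    exact tendsto_nhds_unique (hconv 0) h2
  · intro j
    have hev : ∀ᶠ n in atTop, F (φ n) j ^ 2
        = F (φ n) (j + 1) * (F (φ n) (j + 2) + δ * q ^ j) := by
      filter_upwards [hφ_top.eventually_ge_atTop (j + 1)] with n hn
      rw [hFeq _ j (by omega), hFeq _ (j+1) (by omega), hFeq _ (j+2) (by omega)]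
      exact (hG (φ n)).2.2.2 j (by omega)
    have t1 : Tendsto (fun n => F (φ n) j ^ 2) atTop (𝓝 (L j ^ 2)) := (hconv j).pow 2
    have t2 : Tendsto (fun n => F (φ n) (j + 1) * (F (φ n) (j + 2) + δ * q ^ j)) atTop
        (𝓝 (L (j + 1) * (L (j + 2) + δ * q ^ j))) :=
      (hconv (j + 1)).mul ((hconv (j + 2)).add tendsto_const_nhds)
    exact tendsto_nhds_unique t1 (t2.congr' (hev.mono fun n h => h.symm))
  · intro j
    exact lt_of_lt_of_le (lo_pos hδ hq j) (hLmem j).1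


end Galerkin

section Limit
variable {δ q δ₀ : ℝ}

/-- Uniform (in `δ ≤ δ₀`) lower bounds. -/
noncomputable def mlo (δ₀ q : ℝ) : ℕ → ℝ
  | 0 => 1
  | j + 1 => mlo δ₀ q j ^ 2 / (max 1 (Real.sqrt q) + δ₀ * q ^ j)

lemma mlo_pos (hδ₀ : 0 < δ₀) (hq : 0 < q) : ∀ j, 0 < mlo δ₀ q j := by
  intro j
  induction j with
  | zero => exact one_pos
  | succ n ih =>
      apply div_pos (pow_pos ih 2)
      have h1 : (0:ℝ) < max 1 (Real.sqrt q) := lt_of_lt_of_le one_pos (le_max_left _ _)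
      have := mul_pos hδ₀ (pow_pos hq n)
      linarith

lemma recB_ge_mlo {B : ℕ → ℝ} (hδ : 0 < δ) (hδ₀ : δ ≤ δ₀) (hq : 1 < q)
    (hB : RecB δ q B) (hpos : ∀ j, 0 < B j) : ∀ j, mlo δ₀ q j ≤ B j := by
  have hq0 : 0 < q := lt_trans one_pos hq
  have hδ₀0 : 0 < δ₀ := lt_of_lt_of_le hδ hδ₀
  intro j
  induction j with
  | zero => rw [hB.1]; exact le_rfl
  | succ n ih =>
      have heq := hB.2 n
      set K := max 1 (Real.sqrt q) with hK
      have hKpos : (0:ℝ) < K := lt_of_lt_of_le one_pos (le_max_left _ _)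
      have hden : 0 < K + δ₀ * q ^ n := by positivity
      have hup : B (n + 2) + δ * q ^ n ≤ K + δ₀ * q ^ n := by
        have h1 := sup_bound hδ hq hB hpos (n + 2)
        have h2 : δ * q ^ n ≤ δ₀ * q ^ n :=
          mul_le_mul_of_nonneg_right hδ₀ (pow_pos hq0 n).le
        rw [← hK] at h1
        linarith
      have h3 : B n ^ 2 ≤ B (n + 1) * (K + δ₀ * q ^ n) := by
        rw [heq]
        exact mul_le_mul_of_nonneg_left hup (hpos (n + 1)).le
      show mlo δ₀ q n ^ 2 / (K + δ₀ * q ^ n) ≤ B (n + 1)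
      rw [div_le_iff₀ hden]
      have h4 : mlo δ₀ q n ^ 2 ≤ B n ^ 2 := by
        have := mlo_pos hδ₀0 hq0 n
        nlinarith [ih]
      linarith

/-- Vanishing viscosity limit (componentwise) in normalized variables. -/
lemma limit_delta_zero (hq : 1 < q) (ds : ℕ → ℝ) (hds : ∀ n, 0 < ds n)
    (hds0 : Tendsto ds atTop (𝓝 0)) (Bs : ℕ → ℕ → ℝ)
    (hBs : ∀ n, RecB (ds n) q (Bs n)) (hBpos : ∀ n j, 0 < Bs n j) (j : ℕ) :
    Tendsto (fun n => Bs n j) atTop (𝓝 1) := by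
  have hq0 : 0 < q := lt_trans one_pos hq
  apply tendsto_of_subseq_tendsto
  intro ns hns
  have h0 : Tendsto (fun n => ds (ns n)) atTop (𝓝 0) := hds0.comp hns
  obtain ⟨N, hN⟩ := eventually_atTop.1 (h0.eventually (eventually_le_nhds one_pos))
  set F : ℕ → ℕ → ℝ := fun n i => Bs (ns (n + N)) i with hFdef
  have hbox : ∀ n i, F n i ∈ Set.Icc (mlo 1 q i) (max 1 (Real.sqrt q)) := by
    intro n i
    constructor
    · exact recB_ge_mlo (hds _) (hN (n + N) (by omega)) hq (hBs _) (hBpos _) i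
    · exact sup_bound (hds _) hq (hBs _) (hBpos _) i
  obtain ⟨L, φ, hφ, hLmem, hconv⟩ := exists_subseq_lim F hbox
  have hLrec : RecB 0 q L := by
    constructor
    · have hcst : ∀ n, F (φ n) 0 = 1 := fun n => (hBs _).1
      have h2 : Tendsto (fun n => F (φ n) 0) atTop (𝓝 1) := by
        simp only [hcst]; exact tendsto_const_nhds
      exact tendsto_nhds_unique (hconv 0) h2
    · intro i
      have hδconv : Tendsto (fun n => ds (ns (φ n + N))) atTop (𝓝 0) :=
        h0.comp ((tendsto_add_atTop_nat N).comp hφ.tendsto_atTop)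
      have t1 : Tendsto (fun n => F (φ n) i ^ 2) atTop (𝓝 (L i ^ 2)) := (hconv i).pow 2
      have t2 : Tendsto
          (fun n => F (φ n) (i + 1) * (F (φ n) (i + 2) + ds (ns (φ n + N)) * q ^ i)) atTop
          (𝓝 (L (i + 1) * (L (i + 2) + 0 * q ^ i))) :=
        (hconv (i + 1)).mul ((hconv (i + 2)).add (hδconv.mul_const _))
      have hev : ∀ n, F (φ n) i ^ 2
          = F (φ n) (i + 1) * (F (φ n) (i + 2) + ds (ns (φ n + N)) * q ^ i) :=
        fun n => (hBs (ns (φ n + N))).2 i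
      exact tendsto_nhds_unique t1 (t2.congr (fun n => (hev n).symm))
  have hLpos : ∀ i, 0 < L i := fun i =>
    lt_of_lt_of_le (mlo_pos one_pos hq0 i) (hLmem i).1
  have hLbd : ∀ i, L i ≤ max 1 (Real.sqrt q) := fun i => (hLmem i).2
  have hL1 : ∀ i, L i = 1 := inviscid hq hLrec hLpos hLbd
  refine ⟨fun n => φ n + N, ?_⟩
  have := hconv j
  rw [hL1 j] at this
  exact this


end Limit

noncomputable def qv (lam θ : ℝ) : ℝ := lam ^ (((6:ℝ) - 2 * θ) / 3)
noncomputable def dv (lam θ f0 ν : ℝ) : ℝ := ν / (Real.sqrt f0 * lam ^ (θ / 3 : ℝ))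
noncomputable def toA (lam θ f0 : ℝ) (B : ℕ → ℝ) : ℕ → ℝ :=
  fun j => astar lam θ f0 j * B (j + 1)

section Transfer
variable {lam θ f0 ν : ℝ}

lemma upow (hlam0 : 0 < lam) (r : ℝ) (k : ℕ) : (lam ^ (r:ℝ)) ^ (k:ℕ) = lam ^ (r * k) := by
  rw [Real.rpow_mul hlam0.le, Real.rpow_natCast]

lemma astar_eq (hlam0 : 0 < lam) (j : ℕ) :
    astar lam θ f0 j = Real.sqrt f0 * ((lam ^ (θ/3 : ℝ))⁻¹) ^ (j + 1) := by
  rw [astar, ← Real.rpow_neg hlam0.le, upow hlam0 (-(θ/3)) (j+1)]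
  congr 2
  push_cast
  ring

lemma qv_pow (hlam0 : 0 < lam) (j : ℕ) :
    qv lam θ ^ j = (lam ^ 2) ^ j * (((lam ^ (θ/3 : ℝ))⁻¹) ^ 2) ^ j := by
  have e : ((6:ℝ) - 2*θ)/3 = ((2:ℕ):ℝ) + (-(θ/3))*((2:ℕ):ℝ) := by push_cast; ring
  have h1 : qv lam θ = lam ^ 2 * ((lam ^ (θ/3 : ℝ))⁻¹) ^ 2 := by
    rw [qv, e, Real.rpow_add hlam0, Real.rpow_natCast, ← upow hlam0 (-(θ/3)) 2,
      Real.rpow_neg hlam0.le]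
  rw [h1, mul_pow]

lemma lampow_theta (hlam0 : 0 < lam) (j : ℕ) :
    ((lam ^ j : ℝ)) ^ θ = (lam ^ (θ/3 : ℝ)) ^ (3 * j) := by
  rw [upow hlam0 (θ/3) (3*j), ← Real.rpow_natCast lam j, ← Real.rpow_mul hlam0.le]
  congr 1
  push_cast
  ring

/-- The master pointwise transfer identity. -/
lemma transfer_eq (hlam : 1 < lam) (hf0 : 0 < f0) (B : ℕ → ℝ) (hB0 : B 0 = 1)
    (j : ℕ) :
    -(ν * (lam ^ j) ^ 2 * toA lam θ f0 B j)
      + (lam ^ j) ^ θ * (if j = 0 then (0:ℝ) else toA lam θ f0 B (j - 1)) ^ 2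
      - (lam ^ (j + 1)) ^ θ * toA lam θ f0 B j * toA lam θ f0 B (j + 1)
      + (if j = 0 then f0 else 0)
    = f0 * (lam ^ (θ/3 : ℝ)) ^ j *
        (B j ^ 2 - B (j + 1) * (B (j + 2) + dv lam θ f0 ν * qv lam θ ^ j)) := by
  have hlam0 : 0 < lam := lt_trans one_pos hlam
  set s := Real.sqrt f0 with hsdef
  have hs0 : 0 < s := Real.sqrt_pos.2 hf0
  have hs : s ^ 2 = f0 := Real.sq_sqrt hf0.le
  set u := lam ^ (θ/3 : ℝ) with hudef
  have hu0 : 0 < u := Real.rpow_pos_of_pos hlam0 _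
  have hq : ∀ k : ℕ, qv lam θ ^ k = (lam ^ 2) ^ k * (u⁻¹ ^ 2) ^ k := fun k => qv_pow hlam0 k
  have hA : ∀ k : ℕ, toA lam θ f0 B k = s * u⁻¹ ^ (k + 1) * B (k + 1) := by
    intro k
    rw [toA, astar_eq hlam0]
  have hth : ∀ k : ℕ, ((lam ^ k : ℝ)) ^ θ = u ^ (3 * k) := fun k => lampow_theta hlam0 k
  have hdv : dv lam θ f0 ν = ν / (s * u) := rfl
  rcases Nat.eq_zero_or_pos j with rfl | hj
  · simp only [if_pos rfl, ↓reduceIte]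
    rw [hA 0, hA 1, hth 0, hth 1, hdv, hB0]
    have h2 : ((lam:ℝ) ^ (0:ℕ)) ^ 2 = 1 := by norm_num
    rw [h2, ← hs]
    simp only [inv_pow]
    field_simp
    ring
  · obtain ⟨k, rfl⟩ : ∃ k, j = k + 1 := ⟨j - 1, by omega⟩
    simp only [if_neg (by omega : ¬ k + 1 = 0), Nat.add_sub_cancel]
    rw [hA k, hA (k+1), hA (k+2), hth (k+1), hth (k+2), hdv, hq (k+1)]
    have hpw : ((lam:ℝ) ^ (k+1 : ℕ)) ^ 2 = (lam ^ 2) ^ (k+1) := by ring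
    rw [hpw, ← hs]
    simp only [inv_pow]
    field_simp
    ring
end Transfer

section Glue
variable {lam θ f0 ν : ℝ}

lemma astar_pos (hlam0 : 0 < lam) (hf0 : 0 < f0) (j : ℕ) : 0 < astar lam θ f0 j :=
  mul_pos (Real.sqrt_pos.2 hf0) (Real.rpow_pos_of_pos hlam0 _)

lemma isVisc_iff (hlam : 1 < lam) (hf0 : 0 < f0) (B : ℕ → ℝ) (hB0 : B 0 = 1) :
    IsViscFixedPt lam θ f0 ν (toA lam θ f0 B) ↔ RecB (dv lam θ f0 ν) (qv lam θ) B := by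
  have hlam0 : 0 < lam := lt_trans one_pos hlam
  have hfac : ∀ j : ℕ, (0:ℝ) < f0 * (lam ^ (θ/3 : ℝ)) ^ j :=
    fun j => mul_pos hf0 (pow_pos (Real.rpow_pos_of_pos hlam0 _) j)
  constructor
  · intro h
    refine ⟨hB0, fun j => ?_⟩
    have hj := h j
    rw [transfer_eq hlam hf0 B hB0 j] at hj
    have := (mul_eq_zero.1 hj).resolve_left (ne_of_gt (hfac j))
    nlinarith [this]
  · intro h
    intro j
    rw [transfer_eq hlam hf0 B hB0 j, h.2 j]
    ring

lemma one_lt_qv (hlam : 1 < lam) (hθ2 : θ ≤ 5/2) : 1 < qv lam θ := by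
  rw [qv]
  rw [Real.one_lt_rpow_iff_of_pos (lt_trans one_pos hlam)]
  exact Or.inl ⟨hlam, by linarith⟩

lemma dv_pos (hlam : 1 < lam) (hf0 : 0 < f0) (hν : 0 < ν) : 0 < dv lam θ f0 ν :=
  div_pos hν (mul_pos (Real.sqrt_pos.2 hf0)
    (Real.rpow_pos_of_pos (lt_trans one_pos hlam) _))

lemma ratio_lt_one (hlam : 1 < lam) (hθ1 : 1 ≤ θ) : ((lam ^ (θ/3 : ℝ))⁻¹) ^ 2 < 1 := by
  have h1 : 1 < lam ^ (θ/3 : ℝ) := by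
    rw [Real.one_lt_rpow_iff_of_pos (lt_trans one_pos hlam)]
    exact Or.inl ⟨hlam, by linarith⟩
  have h2 : (lam ^ (θ/3 : ℝ))⁻¹ < 1 := inv_lt_one_of_one_lt₀ h1
  have h3 : 0 < (lam ^ (θ/3 : ℝ))⁻¹ := by positivity
  nlinarith

/-- ℓ² summability with a uniform bound on B. -/
lemma summable_sq (hlam : 1 < lam) (hθ1 : 1 ≤ θ) (hf0 : 0 < f0) {B : ℕ → ℝ} {K : ℝ}
    (hK0 : 0 ≤ K) (hBpos : ∀ j, 0 < B j) (hbd : ∀ j, B j ≤ K) :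
    Summable (fun j => (toA lam θ f0 B j) ^ 2) := by
  have hlam0 : 0 < lam := lt_trans one_pos hlam
  set r := ((lam ^ (θ/3 : ℝ))⁻¹) ^ 2 with hr
  have hr0 : 0 ≤ r := by positivity
  have hr1 : r < 1 := ratio_lt_one hlam hθ1
  apply Summable.of_nonneg_of_le (fun j => sq_nonneg _)
    (g := fun j => (toA lam θ f0 B j) ^2) (f := fun j => (f0 * K ^ 2 * r) * r ^ j)
  · intro j
    rw [toA, astar_eq hlam0]
    have hb := hbd (j + 1)
    have hp := (hBpos (j + 1)).le
    have hxp : (0:ℝ) ≤ (lam ^ (θ/3:ℝ))⁻¹ := by positivity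
    have hs2 : Real.sqrt f0 ^ 2 = f0 := Real.sq_sqrt hf0.le
    have e1 : (Real.sqrt f0 * ((lam ^ (θ/3:ℝ))⁻¹) ^ (j+1) * B (j+1)) ^ 2
        = f0 * r ^ (j + 1) * B (j + 1) ^ 2 := by
      calc (Real.sqrt f0 * ((lam ^ (θ/3:ℝ))⁻¹) ^ (j+1) * B (j+1)) ^ 2
          = Real.sqrt f0 ^ 2 * (((lam ^ (θ/3:ℝ))⁻¹) ^ 2) ^ (j+1) * B (j+1) ^ 2 := by ring
        _ = f0 * r ^ (j + 1) * B (j + 1) ^ 2 := by rw [hs2, hr]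
    rw [e1, pow_succ r j]
    have : B (j+1) ^ 2 ≤ K ^ 2 := by nlinarith
    have hrj : (0:ℝ) ≤ r ^ j := pow_nonneg hr0 j
    calc f0 * (r ^ j * r) * B (j+1) ^ 2 ≤ f0 * (r ^ j * r) * K ^ 2 := by
          apply mul_le_mul_of_nonneg_left this (by positivity)
      _ = f0 * K ^ 2 * r * r ^ j := by ring
  · exact (summable_geometric_of_lt_one hr0 hr1).mul_left _

/-- Pointwise identity for the enstrophy series. -/
lemma h1_term (hlam : 1 < lam) (hf0 : 0 < f0) (hν : 0 < ν) (B : ℕ → ℝ) (j : ℕ) :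
    (lam ^ j : ℝ) ^ 2 * (toA lam θ f0 B j) ^ 2
      = (f0 * Real.sqrt f0 / (lam ^ (θ/3 : ℝ)) / ν)
        * (dv lam θ f0 ν * qv lam θ ^ j * B (j + 1) ^ 2) := by
  have hlam0 : 0 < lam := lt_trans one_pos hlam
  have hu0 : 0 < lam ^ (θ/3 : ℝ) := Real.rpow_pos_of_pos hlam0 _
  rw [toA, astar_eq hlam0, qv_pow hlam0, dv]
  have hpw : ((lam:ℝ) ^ (j : ℕ)) ^ 2 = (lam ^ 2) ^ j := by ring
  rw [hpw]
  set s := Real.sqrt f0 with hsdef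
  have hs0 : 0 < s := Real.sqrt_pos.2 hf0
  have hs2 : s ^ 2 = f0 := Real.sq_sqrt hf0.le
  rw [← hs2]
  simp only [inv_pow]
  field_simp
  ring

lemma h1_hasSum (hlam : 1 < lam) (hθ2 : θ ≤ 5/2) (hf0 : 0 < f0) (hν : 0 < ν)
    {B : ℕ → ℝ} (hB : RecB (dv lam θ f0 ν) (qv lam θ) B) (hpos : ∀ j, 0 < B j) :
    HasSum (fun j => (lam ^ j : ℝ) ^ 2 * (toA lam θ f0 B j) ^ 2)
      ((f0 * Real.sqrt f0 / (lam ^ (θ/3 : ℝ)) / ν) * B 1) := by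
  have h0 := hasSum_energy (dv_pos hlam hf0 hν) (one_lt_qv hlam hθ2) hB hpos
  have hfn : (fun j => (lam ^ j : ℝ) ^ 2 * (toA lam θ f0 B j) ^ 2)
      = fun j => (f0 * Real.sqrt f0 / (lam ^ (θ/3 : ℝ)) / ν)
        * (dv lam θ f0 ν * qv lam θ ^ j * B (j + 1) ^ 2) :=
    funext (h1_term hlam hf0 hν B)
  rw [hfn]
  exact h0.mul_left _

lemma energy_identity (hlam : 1 < lam) (hθ2 : θ ≤ 5/2) (hf0 : 0 < f0) (hν : 0 < ν)
    {B : ℕ → ℝ} (hB : RecB (dv lam θ f0 ν) (qv lam θ) B) (hpos : ∀ j, 0 < B j) :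
    ν * ∑' j, (lam ^ j : ℝ) ^ 2 * (toA lam θ f0 B j) ^ 2 = f0 * toA lam θ f0 B 0 := by
  have hlam0 : 0 < lam := lt_trans one_pos hlam
  have hs0 : 0 < Real.sqrt f0 := Real.sqrt_pos.2 hf0
  have hu0 : 0 < lam ^ (θ/3 : ℝ) := Real.rpow_pos_of_pos hlam0 _
  rw [(h1_hasSum hlam hθ2 hf0 hν hB hpos).tsum_eq, toA, astar_eq hlam0]
  set s := Real.sqrt f0 with hsdef
  have hs2 : s ^ 2 = f0 := Real.sq_sqrt hf0.le
  rw [← hs2]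
  simp only [inv_pow]
  field_simp
  ring

/-- The full package for a single `ν > 0`. -/
lemma package (hlam : 1 < lam) (hθ1 : 1 ≤ θ) (hθ2 : θ ≤ 5/2) (hf0 : 0 < f0)
    {B : ℕ → ℝ} (hν : 0 < ν)
    (hB : RecB (dv lam θ f0 ν) (qv lam θ) B) (hpos : ∀ j, 0 < B j) :
    (∀ j : ℕ, 0 < toA lam θ f0 B j) ∧
    Summable (fun j : ℕ => (toA lam θ f0 B j) ^ 2) ∧
    IsViscFixedPt lam θ f0 ν (toA lam θ f0 B) ∧
    (∀ c : ℕ → ℝ, (∀ j, 0 < c j) → Summable (fun j : ℕ => (c j) ^ 2) →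
      IsViscFixedPt lam θ f0 ν c → c = toA lam θ f0 B) ∧
    Summable (fun j : ℕ => (lam ^ j) ^ 2 * (toA lam θ f0 B j) ^ 2) ∧
    ν * (∑' j : ℕ, (lam ^ j) ^ 2 * (toA lam θ f0 B j) ^ 2) = f0 * toA lam θ f0 B 0 := by
  have hlam0 : 0 < lam := lt_trans one_pos hlam
  have hδ : 0 < dv lam θ f0 ν := dv_pos hlam hf0 hν
  have hq : 1 < qv lam θ := one_lt_qv hlam hθ2
  have hKpos : (0:ℝ) ≤ max 1 (Real.sqrt (qv lam θ)) := le_trans zero_le_one (le_max_left _ _)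
  refine ⟨?_, ?_, ?_, ?_, ?_, ?_⟩
  · exact fun j => mul_pos (astar_pos hlam0 hf0 j) (hpos (j + 1))
  · exact summable_sq hlam hθ1 hf0 hKpos hpos (sup_bound hδ hq hB hpos)
  · exact (isVisc_iff hlam hf0 B hB.1).2 hB
  · intro c hcpos hcsum hcfix
    set C : ℕ → ℝ := fun j => if j = 0 then 1 else c (j - 1) / astar lam θ f0 (j - 1)
      with hCdef
    have htoA : toA lam θ f0 C = c := by
      funext j
      have : C (j + 1) = c j / astar lam θ f0 j := by simp [hCdef]
      rw [toA, this, mul_div_cancel₀]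
      exact ne_of_gt (astar_pos hlam0 hf0 j)
    have hC0 : C 0 = 1 := rfl
    have hCpos : ∀ j, 0 < C j := by
      intro j
      rcases Nat.eq_zero_or_pos j with rfl | hj
      · exact one_pos
      · simp only [hCdef, if_neg (by omega : ¬ j = 0)]
        exact div_pos (hcpos _) (astar_pos hlam0 hf0 _)
    have hCfix : IsViscFixedPt lam θ f0 ν (toA lam θ f0 C) := by rw [htoA]; exact hcfix
    have hCrec : RecB (dv lam θ f0 ν) (qv lam θ) C := (isVisc_iff hlam hf0 C hC0).1 hCfix
    have : C = B := uniq hδ hq hCrec hCpos hB hpos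
    rw [← htoA, this]
  · exact (h1_hasSum hlam hθ2 hf0 hν hB hpos).summable
  · exact energy_identity hlam hθ2 hf0 hν hB hpos

end Glue

end CFAux

open CFAux

/-- Cheskidov–Friedlander: for every `ν > 0` the viscous forced dyadic model has a
unique positive finite-energy fixed point `a^{ν,*}`, with energy dissipation rate
`ε^ν = ν Σ_j λ_j² (a^{ν,*}_j)² = f₀ a^{ν,*}₀`; moreover `a^{ν,*} → a*` in `ℓ²` as
`ν → 0` and the dissipation anomaly holds: `ε^ν → f₀ a*₀ > 0`. -/
theorem viscous_fixed_point_dissipation_anomaly (lam θ f0 : ℝ) (hlam : 1 < lam)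
    (hθ1 : 1 ≤ θ) (hθ2 : θ ≤ 5 / 2) (hf0 : 0 < f0) :
    ∃ A : ℝ → ℕ → ℝ,
      (∀ ν : ℝ, 0 < ν →
        (∀ j : ℕ, 0 < A ν j) ∧
        Summable (fun j : ℕ => (A ν j) ^ 2) ∧
        IsViscFixedPt lam θ f0 ν (A ν) ∧
        (∀ c : ℕ → ℝ, (∀ j, 0 < c j) → Summable (fun j : ℕ => (c j) ^ 2) →
          IsViscFixedPt lam θ f0 ν c → c = A ν) ∧
        Summable (fun j : ℕ => (lam ^ j) ^ 2 * (A ν j) ^ 2) ∧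
        ν * (∑' j : ℕ, (lam ^ j) ^ 2 * (A ν j) ^ 2) = f0 * A ν 0) ∧
      Tendsto (fun ν : ℝ => ∑' j : ℕ, (A ν j - astar lam θ f0 j) ^ 2)
        (nhdsWithin 0 (Set.Ioi 0)) (nhds 0) ∧
      Tendsto (fun ν : ℝ => ν * ∑' j : ℕ, (lam ^ j) ^ 2 * (A ν j) ^ 2)
        (nhdsWithin 0 (Set.Ioi 0)) (nhds (f0 * astar lam θ f0 0)) ∧
      0 < f0 * astar lam θ f0 0 := by
  have hlam0 : 0 < lam := lt_trans one_pos hlam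
  have hq : 1 < qv lam θ := one_lt_qv hlam hθ2
  set K := max 1 (Real.sqrt (qv lam θ)) with hKdef
  have hK1 : (1:ℝ) ≤ K := le_max_left _ _
  -- selected solutions
  have hsolx : ∀ ν : ℝ, ∃ B : ℕ → ℝ,
      0 < ν → RecB (dv lam θ f0 ν) (qv lam θ) B ∧ ∀ j, 0 < B j := by
    intro ν
    rcases lt_or_ge 0 ν with hν | hν
    · obtain ⟨B, hB⟩ := exists_recB (dv_pos hlam hf0 hν) (lt_trans one_pos hq)
      exact ⟨B, fun _ => hB⟩
    · exact ⟨fun _ => 1, fun h => absurd h (not_lt.2 hν)⟩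
  choose sol hsol using hsolx
  set A : ℝ → ℕ → ℝ := fun ν => toA lam θ f0 (sol ν) with hAdef
  have hA : ∀ (ν : ℝ) (j : ℕ), A ν j = astar lam θ f0 j * sol ν (j + 1) := fun ν j => rfl
  -- componentwise limit
  have hcomp : ∀ j : ℕ, Tendsto (fun ν => sol ν (j + 1)) (nhdsWithin 0 (Set.Ioi 0))
      (𝓝 1) := by
    intro j
    rw [tendsto_iff_seq_tendsto]
    intro νs hνs
    rw [tendsto_nhdsWithin_iff] at hνs
    obtain ⟨N, hN⟩ := eventually_atTop.1 hνs.2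
    rw [← tendsto_add_atTop_iff_nat N]
    have hpos' : ∀ n, 0 < νs (n + N) := fun n => hN (n + N) (by omega)
    have hds0 : Tendsto (fun n => dv lam θ f0 (νs (n + N))) atTop (𝓝 0) := by
      have h2 : Tendsto (fun n => νs (n + N)) atTop (𝓝 0) := by
        rw [tendsto_add_atTop_iff_nat N]; exact hνs.1
      have := h2.div_const (Real.sqrt f0 * lam ^ (θ/3 : ℝ))
      simpa [dv, zero_div] using this
    exact limit_delta_zero hq _ (fun n => dv_pos hlam hf0 (hpos' n))
      hds0 (fun n => sol (νs (n + N)))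
      (fun n => (hsol _ (hpos' n)).1) (fun n i => (hsol _ (hpos' n)).2 i) (j + 1)
  have hAcomp : ∀ j : ℕ, Tendsto (fun ν => A ν j) (nhdsWithin 0 (Set.Ioi 0))
      (𝓝 (astar lam θ f0 j)) := by
    intro j
    have := (hcomp j).const_mul (astar lam θ f0 j)
    simpa [hA] using this
  refine ⟨A, ?_, ?_, ?_, ?_⟩
  · intro ν hν
    exact package hlam hθ1 hθ2 hf0 hν (hsol ν hν).1 (hsol ν hν).2
  · -- ℓ² convergence
    have hdom := tendsto_tsum_of_dominated_convergence
      (𝓕 := nhdsWithin (0:ℝ) (Set.Ioi 0))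
      (f := fun ν j => (A ν j - astar lam θ f0 j) ^ 2)
      (g := fun _ => (0:ℝ))
      (bound := fun j => (astar lam θ f0 j * (K + 1)) ^ 2) ?_ ?_ ?_
    · simpa using hdom
    · -- summable bound
      have h2 : ∀ j, (astar lam θ f0 j * (K + 1)) ^ 2
          = ((K+1)^2) * (astar lam θ f0 j * 1) ^ 2 := by intro j; ring
      have h3 : Summable (fun j => (toA lam θ f0 (fun _ => 1) j) ^ 2) := by
        apply summable_sq hlam hθ1 hf0 (K := 1) zero_le_one (fun _ => one_pos)
          (fun _ => le_rfl)
      have h4 : Summable (fun j => (astar lam θ f0 j * 1) ^ 2) := h3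
      exact (h4.mul_left ((K+1)^2)).congr (fun j => (h2 j).symm)
    · intro j
      have := (hAcomp j).sub_const (astar lam θ f0 j)
      simp only [sub_self] at this
      simpa using (this.pow 2)
    · -- uniform bound
      apply eventually_nhdsWithin_of_forall
      intro ν hν j
      have hν' : 0 < ν := hν
      have h1 : 0 < sol ν (j + 1) := (hsol ν hν').2 (j + 1)
      have h2 : sol ν (j + 1) ≤ K :=
        sup_bound (dv_pos hlam hf0 hν') hq (hsol ν hν').1 (hsol ν hν').2 (j + 1)
      have hast : 0 < astar lam θ f0 j := astar_pos (θ := θ) hlam0 hf0 j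
      rw [Real.norm_eq_abs, abs_of_nonneg (sq_nonneg _)]
      show (A ν j - astar lam θ f0 j) ^ 2 ≤ (astar lam θ f0 j * (K + 1)) ^ 2
      have hrw : A ν j - astar lam θ f0 j = astar lam θ f0 j * (sol ν (j+1) - 1) := by
        rw [hA]; ring
      rw [hrw]
      have hsq : (sol ν (j+1) - 1) ^ 2 ≤ (K + 1) ^ 2 := by nlinarith
      calc (astar lam θ f0 j * (sol ν (j+1) - 1)) ^ 2
          = astar lam θ f0 j ^ 2 * (sol ν (j+1) - 1) ^ 2 := by ring
        _ ≤ astar lam θ f0 j ^ 2 * (K + 1) ^ 2 :=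
            mul_le_mul_of_nonneg_left hsq (sq_nonneg _)
        _ = (astar lam θ f0 j * (K + 1)) ^ 2 := by ring
  · -- energy limit
    have hev : ∀ᶠ ν in nhdsWithin (0:ℝ) (Set.Ioi 0),
        ν * ∑' j : ℕ, (lam ^ j) ^ 2 * (A ν j) ^ 2 = f0 * A ν 0 := by
      apply eventually_nhdsWithin_of_forall
      intro ν hν
      exact (package hlam hθ1 hθ2 hf0 hν (hsol ν hν).1 (hsol ν hν).2).2.2.2.2.2
    have h2 := (hAcomp 0).const_mul f0
    exact Tendsto.congr' (hev.mono fun ν h => h.symm) h2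
  · exact mul_pos hf0 (astar_pos hlam0 hf0 0)
end
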